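/- arXiv:2409.17218 — 2 statements merged into one kernel-verified Lean document; each statement's English description precedes it below -/
import Mathlib

section
/- Let ℓ≥1 be an integer and consider the ℓ-intersecting cut problem on a weighted graph G=(V,E) with disjoint boundary vertex sets Γ₀,…,Γ_ℓ and C. Then its optimal value is M = ½ Σ_{k=0}^{ℓ−1} [𝒜((Γ₀∪…∪Γ_k):(Γ_{k+1}∪…∪Γ_ℓ∪C)) + 𝒜((Γ_{k+1}∪…∪Γ_ℓ):(Γ₀∪…∪Γ_k∪C))], a half sum of minimal cut areas; moreover for each k the two minimal cuts α_k and β_k realizing these areas can be chosen disjoint. -/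
open scoped Classical

noncomputable section

namespace RTN

/-! ## Set partitions -/

/-- Number of blocks of a set partition (as an integer). -/
def nb {α : Type*} (p : Setoid α) : ℤ := Nat.card (Quotient p)

/-- The partition distance `d(p,q) = #(p) + #(q) - 2 #(p ⊔ q)`. -/
def pdist {α : Type*} (p q : Setoid α) : ℤ := nb p + nb q - 2 * nb (p ⊔ q)

lemma pdist_comm {α : Type*} (p q : Setoid α) : pdist p q = pdist q p := by
  unfold pdist
  rw [sup_comm p q]
  ring

/-- `k` is a singlet (block of size one) of the partition `p`. -/
def IsSinglet {α : Type*} (p : Setoid α) (k : α) : Prop := ∀ y, p.r k y → y = k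

/-- The number of singlets `#₁(p)` of a partition. -/
def nS {α : Type*} (p : Setoid α) : ℤ := Nat.card {k : α // IsSinglet p k}

/-- The singlet distance `d₁(s₁,s₂) = #₁(s₁) + #₁(s₂) - 2 #₁(s₁ ⊔ s₂)`. -/
def sdist {α : Type*} (s₁ s₂ : Setoid α) : ℤ := nS s₁ + nS s₂ - 2 * nS (s₁ ⊔ s₂)

/-- The singlet pattern `s(p)`: the coarsest partition whose singlets are exactly
those of `p` (all non-singlet elements lie in one block). -/
def spat {α : Type*} (p : Setoid α) : Setoid α where
  r x y := x = y ∨ (¬ IsSinglet p x ∧ ¬ IsSinglet p y)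
  iseqv := by
    refine ⟨fun x => Or.inl rfl, ?_, ?_⟩
    · intro x y h
      rcases h with rfl | ⟨hx, hy⟩
      · exact Or.inl rfl
      · exact Or.inr ⟨hy, hx⟩
    · intro x y z h1 h2
      rcases h1 with rfl | ⟨hx, hy⟩
      · exact h2
      · rcases h2 with rfl | ⟨_, hz⟩
        · exact Or.inr ⟨hx, hy⟩
        · exact Or.inr ⟨hx, hz⟩

/-- The bit `b^k(p)`: `0` if `p` has a singlet at `k`, else `1`. -/
def bbit {α : Type*} (p : Setoid α) (k : α) : ℤ := if IsSinglet p k then 0 else 1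

/-- The size of the block of `p` containing `x`. -/
def blockSize {α : Type*} (p : Setoid α) (x : α) : ℕ := Nat.card {y : α // p.r x y}

noncomputable instance {α : Type*} [Finite α] (s : Setoid α) : Fintype (Quotient s) :=
  Fintype.ofFinite _

/-! ## Permutations -/

/-- The partition of `α` into orbits (cycles) of a permutation. -/
def orbitSetoid {α : Type*} (g : Equiv.Perm α) : Setoid α where
  r x y := ∃ k : ℤ, (g ^ k) x = y
  iseqv := by
    refine ⟨fun x => ⟨0, by simp⟩, ?_, ?_⟩
    · rintro x y ⟨k, rfl⟩
      exact ⟨-k, by simp [← Equiv.Perm.mul_apply, ← zpow_add]⟩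
    · rintro x y z ⟨k, rfl⟩ ⟨l, rfl⟩
      exact ⟨l + k, by rw [zpow_add, Equiv.Perm.mul_apply]⟩

/-- The number of cycles `#(g)` of a permutation (fixed points included). -/
def ncyc {α : Type*} (g : Equiv.Perm α) : ℤ := nb (orbitSetoid g)

/-- The Cayley distance `d(g,h) = N - #(g h⁻¹)`. -/
def cayley {α : Type*} [Fintype α] (g h : Equiv.Perm α) : ℤ :=
  (Fintype.card α : ℤ) - ncyc (g * h⁻¹)

lemma orbitSetoid_inv {α : Type*} (g : Equiv.Perm α) : orbitSetoid g⁻¹ = orbitSetoid g := by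
  apply Setoid.ext
  intro x y
  constructor
  · rintro ⟨k, hk⟩
    exact ⟨-k, by rw [← inv_zpow']; exact hk⟩
  · rintro ⟨k, hk⟩
    exact ⟨-k, by rw [inv_zpow', neg_neg]; exact hk⟩

lemma cayley_comm {α : Type*} [Fintype α] (g h : Equiv.Perm α) : cayley g h = cayley h g := by
  unfold cayley ncyc
  rw [show h * g⁻¹ = (g * h⁻¹)⁻¹ by rw [mul_inv_rev, inv_inv], orbitSetoid_inv]

/-- Coarse graining of a partition `p` by the blocks of `P(g₀)`: the partition of the set
of blocks of `P(g₀)` induced by `p ⊔ P(g₀)`. -/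
def coarse {α : Type*} (g₀ : Equiv.Perm α) (p : Setoid α) :
    Setoid (Quotient (orbitSetoid g₀)) where
  r u v := ∃ x y : α, Quotient.mk (orbitSetoid g₀) x = u ∧ Quotient.mk (orbitSetoid g₀) y = v ∧
    (p ⊔ orbitSetoid g₀).r x y
  iseqv := by
    refine ⟨?_, ?_, ?_⟩
    · intro u
      obtain ⟨x, rfl⟩ := Quotient.exists_rep u
      exact ⟨x, x, rfl, rfl, (p ⊔ orbitSetoid g₀).iseqv.refl x⟩
    · rintro u v ⟨x, y, hx, hy, hxy⟩
      exact ⟨y, x, hy, hx, (p ⊔ orbitSetoid g₀).iseqv.symm hxy⟩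
    · rintro u v w ⟨x, y, hx, hy, hxy⟩ ⟨y', z, hy', hz, hyz⟩
      refine ⟨x, z, hx, hz, ?_⟩
      have h1 : (orbitSetoid g₀).r y y' := Quotient.exact (hy.trans hy'.symm)
      have h2 : (p ⊔ orbitSetoid g₀).r y y' :=
        (le_sup_right : orbitSetoid g₀ ≤ p ⊔ orbitSetoid g₀) h1
      exact (p ⊔ orbitSetoid g₀).iseqv.trans hxy
        ((p ⊔ orbitSetoid g₀).iseqv.trans h2 hyz)

/-- The coarse graining `q_{g₀}(g) ∈ P_{#(g₀)}` of a permutation `g`. -/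
def qc {α : Type*} (g₀ g : Equiv.Perm α) : Setoid (Quotient (orbitSetoid g₀)) :=
  coarse g₀ (orbitSetoid g)

/-! ## Standard reflected-entropy boundary elements -/

/-- `g_B`, the product of `n` disjoint `m`-cycles `(k,ℓ) ↦ (k,ℓ+1)`. -/
def gB (n m : ℕ) : Equiv.Perm (Fin n × Fin m) :=
  Equiv.prodCongr (Equiv.refl (Fin n)) (finRotate m)

/-- `γ`, cyclically shifting `k ↦ k+1` on the elements with `ℓ` in the lower half,
fixing the rest. -/
def gamma (n m : ℕ) : Equiv.Perm (Fin n × Fin m) where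
  toFun x := if m / 2 ≤ (x.2 : ℕ) then (finRotate n x.1, x.2) else x
  invFun x := if m / 2 ≤ (x.2 : ℕ) then ((finRotate n).symm x.1, x.2) else x
  left_inv := by
    intro x
    by_cases h : m / 2 ≤ (x.2 : ℕ) <;> simp [h, -finRotate_apply, -finRotate_symm_apply]
  right_inv := by
    intro x
    by_cases h : m / 2 ≤ (x.2 : ℕ) <;> simp [h, -finRotate_apply, -finRotate_symm_apply]

/-- `g_A = γ⁻¹ g_B γ`. -/
def gA (n m : ℕ) : Equiv.Perm (Fin n × Fin m) :=
  (gamma n m)⁻¹ * gB n m * gamma n m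

/-- For even `m`, `Fin m` splits into an upper and a lower half. -/
def halfEquiv (m : ℕ) (hm : m % 2 = 0) : Fin 2 × Fin (m / 2) ≃ Fin m :=
  finProdFinEquiv.trans (finCongr (by omega))

/-- `X`, the product of the `2n` disjoint `(m/2)`-cycles cyclically permuting the
upper and the lower half of each block `k`. -/
def Xel (n m : ℕ) (hm : m % 2 = 0) : Equiv.Perm (Fin n × Fin m) :=
  Equiv.prodCongr (Equiv.refl (Fin n))
    ((halfEquiv m hm).permCongr
      (Equiv.prodCongr (Equiv.refl (Fin 2)) (finRotate (m / 2))))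

/-- The set of blocks of `P(X)`; it has `2n` elements. -/
abbrev BX (n m : ℕ) (hm : m % 2 = 0) := Quotient (orbitSetoid (Xel n m hm))

/-- `q_A = q_X(g_A) ∈ P_{2n}`. -/
def qAel (n m : ℕ) (hm : m % 2 = 0) : Setoid (BX n m hm) :=
  qc (Xel n m hm) (gA n m)

/-- `q_B = q_X(g_B) ∈ P_{2n}`. -/
def qBel (n m : ℕ) (hm : m % 2 = 0) : Setoid (BX n m hm) :=
  qc (Xel n m hm) (gB n m)

/-! ## Doubled elements (two copies) -/

/-- Two copies of the index set `{1,…,mn}`. -/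
abbrev DIdx (n m : ℕ) := (Fin n × Fin m) ⊕ (Fin n × Fin m)

/-- `g̃_A = g_A ⊕ g_A`. -/
def gAt (n m : ℕ) : Equiv.Perm (DIdx n m) := Equiv.sumCongr (gA n m) (gA n m)

/-- `g̃_B = g_B ⊕ g_B`. -/
def gBt (n m : ℕ) : Equiv.Perm (DIdx n m) := Equiv.sumCongr (gB n m) (gB n m)

/-- `X̃ = X ⊕ X`. -/
def Xt (n m : ℕ) (hm : m % 2 = 0) : Equiv.Perm (DIdx n m) :=
  Equiv.sumCongr (Xel n m hm) (Xel n m hm)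

/-- The set of blocks of `P(X̃)`; it has `4n` elements. -/
abbrev BXt (n m : ℕ) (hm : m % 2 = 0) := Quotient (orbitSetoid (Xt n m hm))

/-- `q̃_A = q_{X̃}(g̃_A) ∈ P_{4n}`. -/
def qAt (n m : ℕ) (hm : m % 2 = 0) : Setoid (BXt n m hm) :=
  qc (Xt n m hm) (gAt n m)

/-- `q̃_B = q_{X̃}(g̃_B) ∈ P_{4n}`. -/
def qBt (n m : ℕ) (hm : m % 2 = 0) : Setoid (BXt n m hm) :=
  qc (Xt n m hm) (gBt n m)

/-- A block of `P(X̃)` lies in the first copy. -/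
def inCopy1 {n m : ℕ} {hm : m % 2 = 0} (u : BXt n m hm) : Prop :=
  ∃ x, Quotient.mk (orbitSetoid (Xt n m hm)) (Sum.inl x) = u

/-- `#₁⁽¹⁾(q)`: the number of singlets of `q` among the first-copy positions. -/
def nS1 {n m : ℕ} {hm : m % 2 = 0} (q : Setoid (BXt n m hm)) : ℤ :=
  Nat.card {u : BXt n m hm // IsSinglet q u ∧ inCopy1 u}

/-- `#₁⁽²⁾(q)`: the number of singlets of `q` among the second-copy positions. -/
def nS2 {n m : ℕ} {hm : m % 2 = 0} (q : Setoid (BXt n m hm)) : ℤ :=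
  Nat.card {u : BXt n m hm // IsSinglet q u ∧ ¬ inCopy1 u}

/-- `τ ∈ P_{4n}`, the two-block partition separating the two copies. -/
def tau (n m : ℕ) (hm : m % 2 = 0) : Setoid (BXt n m hm) where
  r u v := inCopy1 u ↔ inCopy1 v
  iseqv := ⟨fun _ => Iff.rfl, Iff.symm, Iff.trans⟩

/-! ## Graphs, cuts and optimization programs -/

variable {V : Type*}

/-- Sum of an edge function along (the edge list of) a walk, with multiplicity. -/
def wkSum {β : Type*} [AddCommMonoid β] {G : SimpleGraph V} {x y : V}
    (f : Sym2 V → β) (L : G.Walk x y) : β :=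
  (L.edges.map f).sum

variable [Fintype V]

/-- Sum of an edge weight function over a set of edges. -/
def wsum (f : Sym2 V → ℝ) (S : Set (Sym2 V)) : ℝ :=
  ∑ e ∈ Finset.univ.filter (· ∈ S), f e

/-- The cut surface `μ(r)`: edges of `G` with one endpoint in `r`, the other outside. -/
def mu (G : SimpleGraph V) (r : Set V) : Set (Sym2 V) :=
  {e | e ∈ G.edgeSet ∧ ∃ x y, e = s(x, y) ∧ x ∈ r ∧ y ∉ r}

/-- `μ(r₁:r₂)`: edges of `G` with an endpoint in `r₁` and an endpoint in `r₂`. -/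
def mu2 (G : SimpleGraph V) (r₁ r₂ : Set V) : Set (Sym2 V) :=
  {e | e ∈ G.edgeSet ∧ ∃ x y, e = s(x, y) ∧ x ∈ r₁ ∧ y ∈ r₂}

/-- `r` is a cut for `X : Y`. -/
def IsCut (X Y r : Set V) : Prop := X ⊆ r ∧ Y ⊆ rᶜ

/-- The minimal cut area `𝒜(X:Y)`. -/
def minCut (G : SimpleGraph V) (w : Sym2 V → ℝ) (X Y : Set V) : ℝ :=
  sInf {a | ∃ r : Set V, IsCut X Y r ∧ a = wsum w (mu G r)}

/-- `(α,β,γ)` is a triway cut for `(A,B,C)`. -/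
def IsTriway (A B C α β γ : Set V) : Prop :=
  α ∪ β ∪ γ = Set.univ ∧ Disjoint α β ∧ Disjoint β γ ∧ Disjoint α γ ∧
    A ⊆ α ∧ B ⊆ β ∧ C ⊆ γ

/-- The area of a triway cut with tensions `(t_{A:B}, t_{B:C}, t_{C:A})`. -/
def triArea (G : SimpleGraph V) (w : Sym2 V → ℝ) (tAB tBC tCA : ℝ)
    (α β γ : Set V) : ℝ :=
  tAB * wsum w (mu2 G α β) + tBC * wsum w (mu2 G β γ) + tCA * wsum w (mu2 G γ α)

/-- The minimal triway cut area `𝒜_t(A:B:C)`. -/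
def triCut (G : SimpleGraph V) (w : Sym2 V → ℝ) (tAB tBC tCA : ℝ)
    (A B C : Set V) : ℝ :=
  sInf {a | ∃ α β γ : Set V, IsTriway A B C α β γ ∧ a = triArea G w tAB tBC tCA α β γ}

/-- Boundary data: `∂ = A ⊔ B ⊔ C` (pairwise disjoint). -/
def Bdy (A B C : Set V) : Prop := Disjoint A B ∧ Disjoint A C ∧ Disjoint B C

/-! ### The permutation optimization `R` -/

/-- The symmetric edge function induced by the Cayley distance of a vertex
configuration of permutations. -/
def permE {ι : Type*} [Fintype ι] (g : V → Equiv.Perm ι) : Sym2 V → ℝ :=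
  Sym2.lift ⟨fun x y => (cayley (g x) (g y) : ℝ),
    fun x y => congrArg Int.cast (cayley_comm (g x) (g y))⟩

/-- The free energy `R(g) = Σ_e w(e) d(g(x),g(y))`. -/
def Renergy {ι : Type*} [Fintype ι] (G : SimpleGraph V) (w : Sym2 V → ℝ)
    (g : V → Equiv.Perm ι) : ℝ :=
  wsum (fun e => w e * permE g e) G.edgeSet

/-- The optimal value `R` of the permutation optimization. -/
def Rval {ι : Type*} [Fintype ι] (G : SimpleGraph V) (w : Sym2 V → ℝ)
    (A B C : Set V) (g₁ g₂ : Equiv.Perm ι) : ℝ :=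
  sInf {a | ∃ g : V → Equiv.Perm ι,
    (∀ v ∈ A, g v = g₁) ∧ (∀ v ∈ B, g v = g₂) ∧ (∀ v ∈ C, g v = 1) ∧
    a = Renergy G w g}

/-! ### The set-partition optimization `Q` -/

/-- The symmetric integer edge function induced by the partition distance of a vertex
configuration of partitions. -/
def partEZ {κ : Type*} (q : V → Setoid κ) : Sym2 V → ℤ :=
  Sym2.lift ⟨fun x y => pdist (q x) (q y), fun x y => pdist_comm (q x) (q y)⟩

/-- The free energy `Q(q) = Σ_e w(e) d(q(x),q(y))`. -/
def Qenergy {κ : Type*} (G : SimpleGraph V) (w : Sym2 V → ℝ)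
    (q : V → Setoid κ) : ℝ :=
  wsum (fun e => w e * (partEZ q e : ℝ)) G.edgeSet

/-- The optimal value `Q` of the set-partition optimization. -/
def Qval {κ : Type*} (G : SimpleGraph V) (w : Sym2 V → ℝ)
    (A B C : Set V) (q₁ q₂ : Setoid κ) : ℝ :=
  sInf {a | ∃ q : V → Setoid κ,
    (∀ v ∈ A, q v = q₁) ∧ (∀ v ∈ B, q v = q₂) ∧ (∀ v ∈ C, q v = ⊥) ∧
    a = Qenergy G w q}

/-! ### The Boolean optimization `B` -/

/-- The Hamming distance between two bit strings. -/
def ham {κ : Type*} [Fintype κ] (b₁ b₂ : κ → Bool) : ℤ :=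
  ∑ k : κ, if b₁ k = b₂ k then 0 else 1

/-- The bit string `b(q)` of a partition: `false` exactly at singlets. -/
def bvec {κ : Type*} (p : Setoid κ) : κ → Bool :=
  fun u => if IsSinglet p u then false else true

/-- Feasibility of `r` for the Boolean program at configuration `b`. -/
def Bfeas {κ : Type*} [Fintype κ] (G : SimpleGraph V) (A B : Set V) (n : ℕ)
    (b : V → κ → Bool) (r : Sym2 V → ℕ) : Prop :=
  (∀ x ∈ A, ∀ y ∈ B, ∀ L : G.Walk x y,
    2 ∣ wkSum (fun e => (r e : ℤ)) L ∧
    wkSum (fun e => (r e : ℤ)) L ≥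
      2 * ((n : ℤ) - if ∀ v ∈ L.support, ∀ k, b v k = true then 1 else 0)) ∧
  (∀ x y : V, G.Adj x y → (r s(x, y) : ℤ) ≥ ⌈(ham (b x) (b y) : ℚ) / 2⌉)

/-- The inner Boolean optimum `B(b)` at a fixed Boolean configuration `b`. -/
def BvalAt {κ : Type*} [Fintype κ] (G : SimpleGraph V) (w : Sym2 V → ℝ)
    (A B : Set V) (n : ℕ) (b : V → κ → Bool) : ℝ :=
  sInf {a | ∃ r : Sym2 V → ℕ, Bfeas G A B n b r ∧
    a = wsum (fun e => w e * (r e : ℝ)) G.edgeSet}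

/-- The optimal value `B` of the Boolean optimization. -/
def Bval (κ : Type*) [Fintype κ] (G : SimpleGraph V) (w : Sym2 V → ℝ)
    (A B C : Set V) (n : ℕ) : ℝ :=
  sInf {a | ∃ b : V → κ → Bool,
    (∀ v ∈ A ∪ B, ∀ k, b v k = true) ∧ (∀ v ∈ C, ∀ k, b v k = false) ∧
    ∃ r : Sym2 V → ℕ, Bfeas G A B n b r ∧
      a = wsum (fun e => w e * (r e : ℝ)) G.edgeSet}

/-! ### The integer program `I` -/

/-- Feasibility of `(ρ,σ)` for the integer program. -/
def IPfeas (G : SimpleGraph V) (A B C : Set V) (n : ℕ) (ρ σ : Sym2 V → ℕ) : Prop :=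
  (∀ x ∈ A, ∀ y ∈ B, ∀ L : G.Walk x y,
    2 ∣ wkSum (fun e => (σ e : ℤ) + (ρ e : ℤ)) L ∧
    wkSum (fun e => (σ e : ℤ) + (ρ e : ℤ)) L ≥
      2 * ((n : ℤ) - if wkSum (fun e => (ρ e : ℤ)) L = 0 then 1 else 0)) ∧
  (∀ x ∈ A ∪ B, ∀ y ∈ C, ∀ L : G.Walk x y,
    wkSum (fun e => (ρ e : ℤ)) L ≥ (n : ℤ))

/-- The objective of the integer program. -/
def IPobj (G : SimpleGraph V) (w : Sym2 V → ℝ) (ρ σ : Sym2 V → ℕ) : ℝ :=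
  wsum (fun e => w e * ((σ e : ℝ) + (ρ e : ℝ))) G.edgeSet

/-- The optimal value `I` of the integer program. -/
def Ival (G : SimpleGraph V) (w : Sym2 V → ℝ) (A B C : Set V) (n : ℕ) : ℝ :=
  sInf {a | ∃ ρ σ : Sym2 V → ℕ, IPfeas G A B C n ρ σ ∧ a = IPobj G w ρ σ}

/-! ### The ℓ-intersecting cut problem `M` -/

/-- Feasibility for the `ℓ`-intersecting cut problem with boundary sets
`Γ₀, …, Γ_ℓ` and `C`, for a half-integer valued `ϱ`. -/
def Mfeas (G : SimpleGraph V) (Γ : ℕ → Set V) (ℓ : ℕ) (C : Set V)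
    (ϱ : Sym2 V → ℚ) : Prop :=
  (∀ e, ∃ j : ℕ, ϱ e = (j : ℚ) / 2) ∧
  (∀ k k' : ℕ, k ≤ ℓ → k' ≤ ℓ → ∀ x ∈ Γ k, ∀ y ∈ Γ k', ∀ L : G.Walk x y,
    ∃ j : ℕ, wkSum ϱ L = |(k : ℚ) - (k' : ℚ)| + (j : ℚ)) ∧
  (∀ k : ℕ, k ≤ ℓ → ∀ x ∈ Γ k, ∀ y ∈ C, ∀ L : G.Walk x y,
    ∃ j : ℕ, wkSum ϱ L = (ℓ : ℚ) / 2 + (j : ℚ))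

/-- The objective of the `ℓ`-intersecting cut problem. -/
def Mobj (G : SimpleGraph V) (w : Sym2 V → ℝ) (ϱ : Sym2 V → ℚ) : ℝ :=
  wsum (fun e => w e * (ϱ e : ℝ)) G.edgeSet

/-- The optimal value `M` of the `ℓ`-intersecting cut problem. -/
def Mval (G : SimpleGraph V) (w : Sym2 V → ℝ) (Γ : ℕ → Set V) (ℓ : ℕ)
    (C : Set V) : ℝ :=
  sInf {a | ∃ ϱ : Sym2 V → ℚ, Mfeas G Γ ℓ C ϱ ∧ a = Mobj G w ϱ}

/-- The complementary reduced graph `G^c`: the edges of `G` not lying entirely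
inside `V'`. -/
def reducedGraph (G : SimpleGraph V) (V' : Set V) : SimpleGraph V where
  Adj x y := G.Adj x y ∧ ¬ (x ∈ V' ∧ y ∈ V')
  symm := by
    constructor
    intro x y h
    exact ⟨h.1.symm, fun hc => h.2 ⟨hc.2, hc.1⟩⟩
  loopless := by
    constructor
    intro x h
    exact G.loopless.irrefl x h.1

end RTN


/-! ## Auxiliary machinery for Statement 17 -/

namespace ICP
open RTN SimpleGraph Finset

variable {V : Type*}

section walks
variable {β : Type*} [AddCommMonoid β] {G : SimpleGraph V} (f : Sym2 V → β)

lemma wkSum_nil {x : V} : wkSum f (Walk.nil : G.Walk x x) = 0 := by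
  simp [wkSum]

lemma wkSum_cons {x y z : V} (h : G.Adj x y) (p : G.Walk y z) :
    wkSum f (Walk.cons h p) = f s(x, y) + wkSum f p := by
  simp [wkSum]

lemma wkSum_concat {x y z : V} (p : G.Walk x y) (h : G.Adj y z) :
    wkSum f (p.concat h) = wkSum f p + f s(y, z) := by
  simp [wkSum, Walk.edges_concat]

lemma wkSum_reverse {x y : V} (p : G.Walk x y) :
    wkSum f p.reverse = wkSum f p := by
  simp only [wkSum, Walk.edges_reverse, List.map_reverse, List.sum_reverse]

lemma wkSum_half (ϱ : Sym2 V → ℚ) (g : Sym2 V → ℕ) (hg : ∀ e, (g e : ℚ) = 2 * ϱ e)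
    {x y : V} (p : G.Walk x y) :
    (wkSum ϱ p) = ((wkSum g p : ℕ) : ℚ) / 2 := by
  induction p with
  | nil => simp [wkSum]
  | @cons a b c h p ih =>
      rw [wkSum_cons, wkSum_cons, ih]
      push_cast
      have h2 := hg s(a, b)
      linarith

lemma wkSum_sum {ι : Type*} (s : Finset ι) (F : ι → Sym2 V → ℕ) {x y : V} (p : G.Walk x y) :
    wkSum (fun e => ∑ k ∈ s, F k e) p = ∑ k ∈ s, wkSum (F k) p := by
  induction p with
  | nil => simp [wkSum]
  | @cons a b c h p ih =>
      rw [wkSum_cons (f := fun e => ∑ k ∈ s, F k e), ih,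
        show (∑ k ∈ s, wkSum (F k) (Walk.cons h p)) = ∑ k ∈ s, (F k s(a,b) + wkSum (F k) p)
          from Finset.sum_congr rfl fun k _ => wkSum_cons (F k) h p,
        Finset.sum_add_distrib]

end walks

section mu
variable {G : SimpleGraph V} {r s : Set V}

lemma mem_mu_iff {x y : V} (h : G.Adj x y) :
    s(x, y) ∈ mu G r ↔ ((x ∈ r ∧ y ∉ r) ∨ (y ∈ r ∧ x ∉ r)) := by
  constructor
  · rintro ⟨-, a, b, hab, ha, hb⟩
    rw [Sym2.eq_iff] at hab
    rcases hab with ⟨rfl, rfl⟩ | ⟨rfl, rfl⟩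
    · exact Or.inl ⟨ha, hb⟩
    · exact Or.inr ⟨ha, hb⟩
  · rintro (⟨ha, hb⟩ | ⟨ha, hb⟩)
    · exact ⟨h, x, y, rfl, ha, hb⟩
    · exact ⟨h.symm.symm, y, x, Sym2.eq_swap.symm, ha, hb⟩

lemma not_mem_mu {e : Sym2 V} (he : e ∉ G.edgeSet) : e ∉ mu G r := fun h => he h.1

lemma mu_compl : mu G rᶜ = mu G r := by
  ext e
  constructor
  · rintro ⟨he, a, b, rfl, ha, hb⟩
    exact ⟨he, b, a, Sym2.eq_swap.symm, by simpa using hb, by simpa using ha⟩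
  · rintro ⟨he, a, b, rfl, ha, hb⟩
    exact ⟨he, b, a, Sym2.eq_swap.symm, by simpa using hb, by simpa using ha⟩

/-- Crossing-parity: the number of μ(r)-edges along a walk exceeds the separation
indicator by an even amount. -/
lemma walk_cross (r : Set V) {x y : V} (W : G.Walk x y) :
    ∃ j : ℕ, wkSum (fun e => if e ∈ mu G r then (1 : ℕ) else 0) W =
      (if (x ∈ r) ↔ (y ∈ r) then 0 else 1) + 2 * j := by
  induction W with
  | nil => exact ⟨0, by simp [wkSum_nil]⟩
  | @cons a b c h p ih =>
      obtain ⟨j, hj⟩ := ih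
      rw [wkSum_cons, hj]
      have he : (if s(a, b) ∈ mu G r then (1 : ℕ) else 0) =
          if (a ∈ r) ↔ (b ∈ r) then 0 else 1 := by
        rw [if_congr (mem_mu_iff h) rfl rfl]
        by_cases ha : a ∈ r <;> by_cases hb : b ∈ r <;> simp [ha, hb]
      rw [he]
      by_cases ha : a ∈ r <;> by_cases hb : b ∈ r <;> by_cases hc : c ∈ r <;>
        simp [ha, hb, hc] <;> exact ⟨j + 1, by omega⟩

end mu

/-- Counting separations over levels. -/
lemma count_sep (ℓ a b : ℕ) :
    ∑ k ∈ Finset.range ℓ, (if (a ≤ k) ↔ (b ≤ k) then (0 : ℕ) else 1) =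
      min (max a b) ℓ - min (min a b) ℓ := by
  have h1 : ∀ k, (if (a ≤ k) ↔ (b ≤ k) then (0 : ℕ) else 1) =
      if (min a b ≤ k ∧ k < max a b) then 1 else 0 := by
    intro k
    by_cases h : (a ≤ k) ↔ (b ≤ k)
    · rw [if_pos h, if_neg (by omega)]
    · rw [if_neg h, if_pos (by omega)]
  simp only [h1]
  rw [Finset.sum_boole]
  have h2 : (Finset.range ℓ).filter (fun k => min a b ≤ k ∧ k < max a b) =
      Finset.Ico (min (min a b) ℓ) (min (max a b) ℓ) := by
    ext k
    simp only [Finset.mem_filter, Finset.mem_range, Finset.mem_Ico]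
    omega
  rw [h2, Nat.card_Ico]
  simp

section wsum
variable [Fintype V] {G : SimpleGraph V}

lemma wsum_eq_sum_ite (f : Sym2 V → ℝ) (S : Set (Sym2 V)) :
    wsum f S = ∑ e : Sym2 V, if e ∈ S then f e else 0 := by
  rw [wsum, Finset.sum_filter]

lemma wsum_mu_submod (w : Sym2 V → ℝ) (hw : ∀ e, 0 ≤ w e) (r s : Set V) :
    wsum w (mu G (r ∩ s)) + wsum w (mu G (r ∪ s)) ≤ wsum w (mu G r) + wsum w (mu G s) := by
  simp only [wsum_eq_sum_ite, ← Finset.sum_add_distrib]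
  apply Finset.sum_le_sum
  intro e _
  induction e using Sym2.inductionOn with
  | hf x y =>
    by_cases hadj : G.Adj x y
    · rw [if_congr (mem_mu_iff hadj) rfl rfl, if_congr (mem_mu_iff hadj) rfl rfl,
        if_congr (mem_mu_iff hadj) rfl rfl, if_congr (mem_mu_iff hadj) rfl rfl]
      have hwe := hw s(x, y)
      by_cases hx : x ∈ r <;> by_cases hy : y ∈ r <;> by_cases hx2 : x ∈ s <;>
        by_cases hy2 : y ∈ s <;>
        simp [hx, hy, hx2, hy2] <;> linarith
    · have h1 : s(x,y) ∉ G.edgeSet := fun hc => hadj hc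
      simp [not_mem_mu h1]

lemma minCut_set_finite (w : Sym2 V → ℝ) (X Y : Set V) :
    {a | ∃ r : Set V, IsCut X Y r ∧ a = wsum w (mu G r)}.Finite := by
  have : {a | ∃ r : Set V, IsCut X Y r ∧ a = wsum w (mu G r)} =
      (fun r => wsum w (mu G (r : Set V))) '' {r | IsCut X Y r} := by
    ext a; simp [eq_comm]
  rw [this]
  exact Set.Finite.image _ (Set.toFinite _)

lemma minCut_le (w : Sym2 V → ℝ) {X Y r : Set V} (hr : IsCut X Y r) :
    minCut G w X Y ≤ wsum w (mu G r) :=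
  csInf_le (minCut_set_finite w X Y).bddBelow ⟨r, hr, rfl⟩

lemma minCut_attained (w : Sym2 V → ℝ) {X Y : Set V} (h : Disjoint X Y) :
    ∃ r : Set V, IsCut X Y r ∧ wsum w (mu G r) = minCut G w X Y := by
  have hne : {a | ∃ r : Set V, IsCut X Y r ∧ a = wsum w (mu G r)}.Nonempty :=
    ⟨_, X, ⟨subset_rfl, fun y hy hy2 => h.ne_of_mem hy2 hy rfl⟩, rfl⟩
  obtain ⟨r, hr, ha⟩ := hne.csInf_mem (minCut_set_finite w X Y)
  exact ⟨r, hr, ha.symm⟩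

/-- Disjoint pair of minimal cuts via submodular uncrossing. -/
lemma exists_disjoint_mincuts (w : Sym2 V → ℝ) (hw : ∀ e, 0 ≤ w e)
    {X Y X' Y' : Set V} (hXY : Disjoint X Y) (hX'Y' : Disjoint X' Y')
    (hXY' : X ⊆ Y') (hX'Y : X' ⊆ Y) :
    ∃ a b : Set V, IsCut X Y a ∧ wsum w (mu G a) = minCut G w X Y ∧
      IsCut X' Y' b ∧ wsum w (mu G b) = minCut G w X' Y' ∧ Disjoint a b := by
  obtain ⟨r, hr, hrv⟩ := minCut_attained (G := G) w hXY
  obtain ⟨r', hr', hrv'⟩ := minCut_attained (G := G) w hX'Y'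
  set a : Set V := r ∩ r'ᶜ with ha
  set b : Set V := r' ∩ rᶜ with hb
  have hcuta : IsCut X Y a := by
    constructor
    · intro x hx
      exact ⟨hr.1 hx, hr'.2 (hXY' hx)⟩
    · intro y hy hya
      exact (hr.2 hy) hya.1
  have hcutb : IsCut X' Y' b := by
    constructor
    · intro x hx
      exact ⟨hr'.1 hx, hr.2 (hX'Y hx)⟩
    · intro y hy hyb
      exact (hr'.2 hy) hyb.1
  have hsub := wsum_mu_submod (G := G) w hw r r'ᶜ
  have hident : r ∪ r'ᶜ = bᶜ := by
    rw [hb]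
    ext v
    by_cases h1 : v ∈ r <;> by_cases h2 : v ∈ r' <;> simp [h1, h2]
  have hra : r ∩ r'ᶜ = a := rfl
  have hmc : wsum w (mu G (r ∪ r'ᶜ)) = wsum w (mu G b) := by
    rw [hident, mu_compl]
  have hmr' : wsum w (mu G r'ᶜ) = wsum w (mu G r') := by rw [mu_compl]
  have h1 : minCut G w X Y ≤ wsum w (mu G a) := minCut_le w hcuta
  have h2 : minCut G w X' Y' ≤ wsum w (mu G b) := minCut_le w hcutb
  rw [hra, hmc, hmr', hrv, hrv'] at hsub
  refine ⟨a, b, hcuta, by linarith, hcutb, by linarith, ?_⟩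
  rw [Set.disjoint_left]
  rintro v ⟨hv1, hv2⟩ ⟨hv3, hv4⟩
  exact hv2 hv3

lemma sum_range_four (f : ℕ → ℝ) (n : ℕ) :
    ∑ j ∈ Finset.range (4 * n), f j =
      ∑ k ∈ Finset.range n, (f (4*k) + f (4*k+1) + f (4*k+2) + f (4*k+3)) := by
  induction n with
  | zero => simp
  | succ n ih =>
      rw [Finset.sum_range_succ, ← ih, show 4 * (n+1) = (4*n)+1+1+1+1 by ring]
      rw [Finset.sum_range_succ, Finset.sum_range_succ, Finset.sum_range_succ,
        Finset.sum_range_succ]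
      ring_nf

end wsum
section lower
variable {G : SimpleGraph V} (Γ : ℕ → Set V) (ℓ : ℕ) (C : Set V) (q : Sym2 V → ℕ)

/-- Candidate values for the `Γ`-distance potential `h`. -/
def HsSet (G : SimpleGraph V) (v : V) : Set ℕ :=
  {n | ∃ a, a ≤ ℓ ∧ ∃ u, u ∈ Γ a ∧ ∃ W : G.Walk u v, n = 2 * a + wkSum q W}

/-- Candidate values for the reversed potential `g`. -/
def GsSet (G : SimpleGraph V) (v : V) : Set ℕ :=
  {n | ∃ a, a ≤ ℓ ∧ ∃ u, u ∈ Γ a ∧ ∃ W : G.Walk u v, n = 2 * (ℓ - a) + wkSum q W}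

/-- Candidate values for the `C`-distance potential `f`. -/
def FsSet (G : SimpleGraph V) (v : V) : Set ℕ :=
  {n | ∃ u, u ∈ C ∧ ∃ W : G.Walk u v, n = wkSum q W}

def RGp (G : SimpleGraph V) (v : V) : Prop := (HsSet Γ ℓ q G v).Nonempty
def RCp (G : SimpleGraph V) (v : V) : Prop := (FsSet C q G v).Nonempty

def Hs (G : SimpleGraph V) (v : V) : ℕ := sInf (HsSet Γ ℓ q G v)
def Gs (G : SimpleGraph V) (v : V) : ℕ := sInf (GsSet Γ ℓ q G v)
def Fs (G : SimpleGraph V) (v : V) : ℕ := sInf (FsSet C q G v)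

/-- Clamp to `[0, 4ℓ]`. -/
def clampI (t : ℤ) : ℤ := max 0 (min (4 * (ℓ : ℤ)) t)

/-- The combined cut potential. -/
def Npot (R1 R2 : Prop) (H Gg F : ℕ) : ℤ :=
  if R1 then
    (if R2 then
      clampI ℓ (min (H : ℤ) ((ℓ : ℤ) + (F : ℤ)) - min (Gg : ℤ) ((ℓ : ℤ) + (F : ℤ)) +
        2 * max 0 ((ℓ : ℤ) - (F : ℤ)) + 2 * (ℓ : ℤ))
    else clampI ℓ ((H : ℤ) - (Gg : ℤ) + 2 * (ℓ : ℤ)))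
  else
    (if R2 then clampI ℓ (2 * max 0 ((ℓ : ℤ) - (F : ℤ)) + 2 * (ℓ : ℤ)) else 0)

def Npa (G : SimpleGraph V) (v : V) : ℤ :=
  Npot ℓ (RGp Γ ℓ q G v) (RCp C q G v) (Hs Γ ℓ q G v) (Gs Γ ℓ q G v) (Fs C q G v)

def Npb (G : SimpleGraph V) (v : V) : ℤ :=
  Npot ℓ (RGp Γ ℓ q G v) (RCp C q G v) (Gs Γ ℓ q G v) (Hs Γ ℓ q G v) (Fs C q G v)

lemma Npot_nonneg (R1 R2 : Prop) (H Gg F : ℕ) : 0 ≤ Npot ℓ R1 R2 H Gg F := by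
  unfold Npot clampI
  split <;> split <;> omega

lemma Npot_le (R1 R2 : Prop) (H Gg F : ℕ) : Npot ℓ R1 R2 H Gg F ≤ 4 * (ℓ : ℤ) := by
  unfold Npot clampI
  split <;> split <;> omega

variable {Γ ℓ C q}

lemma GsSet_nonempty {v : V} (h : RGp Γ ℓ q G v) : (GsSet Γ ℓ q G v).Nonempty := by
  obtain ⟨n, a, ha, u, hu, W, hn⟩ := h
  exact ⟨2 * (ℓ - a) + wkSum q W, a, ha, u, hu, W, rfl⟩

/-- Reachability propagates along edges. -/
lemma RGp_adj {x y : V} (hadj : G.Adj x y) (h : RGp Γ ℓ q G x) : RGp Γ ℓ q G y := by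
  obtain ⟨n, a, ha, u, hu, W, hn⟩ := h
  exact ⟨2 * a + wkSum q (W.concat hadj), a, ha, u, hu, W.concat hadj, rfl⟩

lemma RCp_adj {x y : V} (hadj : G.Adj x y) (h : RCp C q G x) : RCp C q G y := by
  obtain ⟨n, u, hu, W, hn⟩ := h
  exact ⟨wkSum q (W.concat hadj), u, hu, W.concat hadj, rfl⟩

lemma Hs_lip {x y : V} (hadj : G.Adj x y) (h : RGp Γ ℓ q G x) :
    Hs Γ ℓ q G y ≤ Hs Γ ℓ q G x + q s(x, y) := by
  obtain ⟨a, ha, u, hu, W, hn⟩ := Nat.sInf_mem h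
  have hmem : 2 * a + wkSum q W + q s(x, y) ∈ HsSet Γ ℓ q G y :=
    ⟨a, ha, u, hu, W.concat hadj, by rw [wkSum_concat]; ring⟩
  calc Hs Γ ℓ q G y ≤ 2 * a + wkSum q W + q s(x, y) := Nat.sInf_le hmem
    _ = Hs Γ ℓ q G x + q s(x, y) := by unfold Hs; rw [hn]

lemma Gs_lip {x y : V} (hadj : G.Adj x y) (h : RGp Γ ℓ q G x) :
    Gs Γ ℓ q G y ≤ Gs Γ ℓ q G x + q s(x, y) := by
  obtain ⟨a, ha, u, hu, W, hn⟩ := Nat.sInf_mem (GsSet_nonempty h)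
  have hmem : 2 * (ℓ - a) + wkSum q W + q s(x, y) ∈ GsSet Γ ℓ q G y :=
    ⟨a, ha, u, hu, W.concat hadj, by rw [wkSum_concat]; ring⟩
  calc Gs Γ ℓ q G y ≤ 2 * (ℓ - a) + wkSum q W + q s(x, y) := Nat.sInf_le hmem
    _ = Gs Γ ℓ q G x + q s(x, y) := by unfold Gs; rw [hn]

lemma Fs_lip {x y : V} (hadj : G.Adj x y) (h : RCp C q G x) :
    Fs C q G y ≤ Fs C q G x + q s(x, y) := by
  obtain ⟨u, hu, W, hn⟩ := Nat.sInf_mem h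
  have hmem : wkSum q W + q s(x, y) ∈ FsSet C q G y :=
    ⟨u, hu, W.concat hadj, by rw [wkSum_concat]⟩
  calc Fs C q G y ≤ wkSum q W + q s(x, y) := Nat.sInf_le hmem
    _ = Fs C q G x + q s(x, y) := by unfold Fs; rw [hn]

/-- The per-edge Lipschitz bound for the combined potentials. -/
lemma Npot_edge {x y : V} (hadj : G.Adj x y) :
    ((Npa Γ ℓ C q G x - Npa Γ ℓ C q G y).natAbs : ℤ) +
      ((Npb Γ ℓ C q G x - Npb Γ ℓ C q G y).natAbs : ℤ) ≤ 4 * (q s(x, y) : ℤ) := by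
  have hGxy : RGp Γ ℓ q G x ↔ RGp Γ ℓ q G y :=
    ⟨RGp_adj hadj, RGp_adj hadj.symm⟩
  have hCxy : RCp C q G x ↔ RCp C q G y := ⟨RCp_adj hadj, RCp_adj hadj.symm⟩
  have hsymm : s(y, x) = s(x, y) := Sym2.eq_swap
  unfold Npa Npb Npot
  by_cases hG : RGp Γ ℓ q G x
  · have hGy : RGp Γ ℓ q G y := hGxy.1 hG
    have lh1 := Hs_lip hadj hG
    have lh2 := Hs_lip hadj.symm hGy
    rw [hsymm] at lh2
    have lg1 := Gs_lip hadj hG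
    have lg2 := Gs_lip hadj.symm hGy
    rw [hsymm] at lg2
    by_cases hC : RCp C q G x
    · have hCy : RCp C q G y := hCxy.1 hC
      have lf1 := Fs_lip hadj hC
      have lf2 := Fs_lip hadj.symm hCy
      rw [hsymm] at lf2
      simp only [eq_true hG, eq_true hGy, eq_true hC, eq_true hCy, if_true]
      unfold clampI
      set Q : ℤ := (q s(x, y) : ℤ) with hQ
      set Hx : ℤ := (Hs Γ ℓ q G x : ℤ)
      set Hy : ℤ := (Hs Γ ℓ q G y : ℤ)
      set Gx : ℤ := (Gs Γ ℓ q G x : ℤ)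
      set Gy : ℤ := (Gs Γ ℓ q G y : ℤ)
      set Fx : ℤ := (Fs C q G x : ℤ)
      set Fy : ℤ := (Fs C q G y : ℤ)
      have c1 : min Hx ((ℓ:ℤ) + Fx) ≤ min Hy ((ℓ:ℤ) + Fy) + Q := by omega
      have c2 : min Hy ((ℓ:ℤ) + Fy) ≤ min Hx ((ℓ:ℤ) + Fx) + Q := by omega
      have c3 : min Gx ((ℓ:ℤ) + Fx) ≤ min Gy ((ℓ:ℤ) + Fy) + Q := by omega
      have c4 : min Gy ((ℓ:ℤ) + Fy) ≤ min Gx ((ℓ:ℤ) + Fx) + Q := by omega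
      have c5 : max 0 ((ℓ:ℤ) - Fx) ≤ max 0 ((ℓ:ℤ) - Fy) + Q := by omega
      have c6 : max 0 ((ℓ:ℤ) - Fy) ≤ max 0 ((ℓ:ℤ) - Fx) + Q := by omega
      set A1 : ℤ := min Hx ((ℓ:ℤ) + Fx)
      set A2 : ℤ := min Hy ((ℓ:ℤ) + Fy)
      set B1 : ℤ := min Gx ((ℓ:ℤ) + Fx)
      set B2 : ℤ := min Gy ((ℓ:ℤ) + Fy)
      set M1 : ℤ := max 0 ((ℓ:ℤ) - Fx)
      set M2 : ℤ := max 0 ((ℓ:ℤ) - Fy)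
      have key : ((A1 - B1 + 2*M1) - (A2 - B2 + 2*M2)).natAbs +
          ((B1 - A1 + 2*M1) - (B2 - A2 + 2*M2)).natAbs ≤ (4*Q).toNat := by omega
      omega
    · have hCy : ¬ RCp C q G y := fun h => hC (hCxy.2 h)
      simp only [eq_true hG, eq_true hGy, eq_false hC, eq_false hCy, if_true, if_false]
      unfold clampI
      omega
  · have hGy : ¬ RGp Γ ℓ q G y := fun h => hG (hGxy.2 h)
    by_cases hC : RCp C q G x
    · have hCy : RCp C q G y := hCxy.1 hC
      have lf1 := Fs_lip hadj hC
      have lf2 := Fs_lip hadj.symm hCy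
      rw [hsymm] at lf2
      simp only [eq_false hG, eq_false hGy, eq_true hC, eq_true hCy, if_true, if_false]
      unfold clampI
      omega
    · have hCy : ¬ RCp C q G y := fun h => hC (hCxy.2 h)
      simp only [eq_false hG, eq_false hGy, eq_false hC, eq_false hCy, if_true, if_false]
      omega

end lower

section boundary
variable [Fintype V] {G : SimpleGraph V} {Γ : ℕ → Set V} {ℓ : ℕ} {C : Set V}
  {ϱ : Sym2 V → ℚ} {q : Sym2 V → ℕ}

lemma RGp_of_mem {v : V} {b : ℕ} (hb : b ≤ ℓ) (hv : v ∈ Γ b) : RGp Γ ℓ q G v :=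
  ⟨2 * b + wkSum q (Walk.nil : G.Walk v v), b, hb, v, hv, Walk.nil, rfl⟩

lemma RCp_of_mem {v : V} (hv : v ∈ C) : RCp C q G v :=
  ⟨wkSum q (Walk.nil : G.Walk v v), v, hv, Walk.nil, rfl⟩

variable (hq : ∀ e, (q e : ℚ) = 2 * ϱ e) (hfe : RTN.Mfeas G Γ ℓ C ϱ)
include hq hfe

lemma Hs_boundary {v : V} {b : ℕ} (hb : b ≤ ℓ) (hv : v ∈ Γ b) :
    Hs Γ ℓ q G v = 2 * b := by
  have hmem : 2 * b ∈ HsSet Γ ℓ q G v :=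
    ⟨b, hb, v, hv, Walk.nil, by rw [wkSum_nil]; ring⟩
  have hlow : ∀ n ∈ HsSet Γ ℓ q G v, 2 * b ≤ n := by
    rintro n ⟨a, ha, u, hu, W, rfl⟩
    obtain ⟨j, hj⟩ := hfe.2.1 a b ha hb u hu v hv W
    rw [wkSum_half ϱ q hq W] at hj
    have habs : |(a : ℚ) - b| ≥ (b : ℚ) - a := by
      rw [abs_sub_comm]; exact le_abs_self _
    have hcast : ((2 * a + wkSum q W : ℕ) : ℚ) ≥ 2 * b := by
      push_cast
      have : ((wkSum q W : ℕ) : ℚ) = 2 * |(a : ℚ) - b| + 2 * j := by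
        field_simp at hj; linarith
      linarith
    exact_mod_cast hcast
  exact le_antisymm (Nat.sInf_le hmem) (hlow _ (Nat.sInf_mem ⟨_, hmem⟩))

lemma Gs_boundary {v : V} {b : ℕ} (hb : b ≤ ℓ) (hv : v ∈ Γ b) :
    Gs Γ ℓ q G v = 2 * (ℓ - b) := by
  have hmem : 2 * (ℓ - b) ∈ GsSet Γ ℓ q G v :=
    ⟨b, hb, v, hv, Walk.nil, by rw [wkSum_nil]; ring⟩
  have hlow : ∀ n ∈ GsSet Γ ℓ q G v, 2 * (ℓ - b) ≤ n := by
    rintro n ⟨a, ha, u, hu, W, rfl⟩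
    obtain ⟨j, hj⟩ := hfe.2.1 a b ha hb u hu v hv W
    rw [wkSum_half ϱ q hq W] at hj
    have habs : |(a : ℚ) - b| ≥ (a : ℚ) - b := le_abs_self _
    have hsub : ((ℓ - a : ℕ) : ℚ) = (ℓ : ℚ) - a := by
      rw [Nat.cast_sub ha]
    have hsub2 : ((ℓ - b : ℕ) : ℚ) = (ℓ : ℚ) - b := by
      rw [Nat.cast_sub hb]
    have hcast : ((2 * (ℓ - a) + wkSum q W : ℕ) : ℚ) ≥ 2 * ((ℓ - b : ℕ) : ℚ) := by
      push_cast [hsub, hsub2]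
      have : ((wkSum q W : ℕ) : ℚ) = 2 * |(a : ℚ) - b| + 2 * j := by
        field_simp at hj; linarith
      linarith
    exact_mod_cast hcast
  exact le_antisymm (Nat.sInf_le hmem) (hlow _ (Nat.sInf_mem ⟨_, hmem⟩))

lemma Fs_ge_boundary {v : V} {b : ℕ} (hb : b ≤ ℓ) (hv : v ∈ Γ b)
    (hrc : RCp C q G v) : ℓ ≤ Fs C q G v := by
  have hlow : ∀ n ∈ FsSet C q G v, ℓ ≤ n := by
    rintro n ⟨u, hu, W, rfl⟩
    obtain ⟨j, hj⟩ := hfe.2.2 b hb v hv u hu W.reverse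
    rw [wkSum_reverse, wkSum_half ϱ q hq W] at hj
    have hcast : ((wkSum q W : ℕ) : ℚ) ≥ (ℓ : ℚ) := by
      field_simp at hj
      have hj' : ((wkSum q W : ℕ) : ℚ) = ℓ + 2 * j := by linarith
      rw [hj']
      have : (0:ℚ) ≤ (j:ℚ) := Nat.cast_nonneg j
      linarith
    exact_mod_cast hcast
  exact hlow _ (Nat.sInf_mem hrc)

lemma Fs_C {v : V} (hv : v ∈ C) : Fs C q G v = 0 :=
  Nat.le_zero.mp (Nat.sInf_le ⟨v, hv, Walk.nil, by rw [wkSum_nil]⟩)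

lemma Hs_ge_C {v : V} (hv : v ∈ C) (hrg : RGp Γ ℓ q G v) : ℓ ≤ Hs Γ ℓ q G v := by
  have hlow : ∀ n ∈ HsSet Γ ℓ q G v, ℓ ≤ n := by
    rintro n ⟨a, ha, u, hu, W, rfl⟩
    obtain ⟨j, hj⟩ := hfe.2.2 a ha u hu v hv W
    rw [wkSum_half ϱ q hq W] at hj
    have hcast : ((2 * a + wkSum q W : ℕ) : ℚ) ≥ (ℓ : ℚ) := by
      push_cast
      field_simp at hj
      have hj' : ((wkSum q W : ℕ) : ℚ) = ℓ + 2 * j := by linarith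
      have h0 : (0:ℚ) ≤ a := Nat.cast_nonneg a
      have h1 : (0:ℚ) ≤ j := Nat.cast_nonneg j
      linarith
    exact_mod_cast hcast
  exact hlow _ (Nat.sInf_mem hrg)

lemma Gs_ge_C {v : V} (hv : v ∈ C) (hrg : RGp Γ ℓ q G v) : ℓ ≤ Gs Γ ℓ q G v := by
  have hlow : ∀ n ∈ GsSet Γ ℓ q G v, ℓ ≤ n := by
    rintro n ⟨a, ha, u, hu, W, rfl⟩
    obtain ⟨j, hj⟩ := hfe.2.2 a ha u hu v hv W
    rw [wkSum_half ϱ q hq W] at hj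
    have hcast : ((2 * (ℓ - a) + wkSum q W : ℕ) : ℚ) ≥ (ℓ : ℚ) := by
      push_cast
      field_simp at hj
      have hj' : ((wkSum q W : ℕ) : ℚ) = ℓ + 2 * j := by linarith
      have h0 : (0:ℚ) ≤ ((ℓ - a : ℕ) : ℚ) := Nat.cast_nonneg _
      have h1 : (0:ℚ) ≤ j := Nat.cast_nonneg j
      linarith
    exact_mod_cast hcast
  exact hlow _ (Nat.sInf_mem (GsSet_nonempty hrg))

lemma Npa_boundary {v : V} {b : ℕ} (hb : b ≤ ℓ) (hv : v ∈ Γ b) :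
    Npa Γ ℓ C q G v = 4 * (b : ℤ) := by
  have hrg : RGp Γ ℓ q G v := RGp_of_mem hb hv
  have hH := Hs_boundary hq hfe hb hv
  have hG := Gs_boundary hq hfe hb hv
  unfold Npa Npot clampI
  rw [if_pos hrg]
  by_cases hrc : RCp C q G v
  · have hF := Fs_ge_boundary hq hfe hb hv hrc
    rw [if_pos hrc, hH, hG]
    omega
  · rw [if_neg hrc, hH, hG]
    omega

lemma Npb_boundary {v : V} {b : ℕ} (hb : b ≤ ℓ) (hv : v ∈ Γ b) :
    Npb Γ ℓ C q G v = 4 * (ℓ : ℤ) - 4 * (b : ℤ) := by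
  have hrg : RGp Γ ℓ q G v := RGp_of_mem hb hv
  have hH := Hs_boundary hq hfe hb hv
  have hG := Gs_boundary hq hfe hb hv
  unfold Npb Npot clampI
  rw [if_pos hrg]
  by_cases hrc : RCp C q G v
  · have hF := Fs_ge_boundary hq hfe hb hv hrc
    rw [if_pos hrc, hH, hG]
    omega
  · rw [if_neg hrc, hH, hG]
    omega

lemma Npa_C {v : V} (hv : v ∈ C) : Npa Γ ℓ C q G v = 4 * (ℓ : ℤ) := by
  have hrc : RCp C q G v := RCp_of_mem hv
  have hF := Fs_C (G := G) (q := q) hq hfe hv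
  unfold Npa Npot clampI
  by_cases hrg : RGp Γ ℓ q G v
  · have h1 := Hs_ge_C hq hfe hv hrg
    have h2 := Gs_ge_C hq hfe hv hrg
    rw [if_pos hrg, if_pos hrc, hF]
    omega
  · rw [if_neg hrg, if_pos hrc, hF]
    omega

lemma Npb_C {v : V} (hv : v ∈ C) : Npb Γ ℓ C q G v = 4 * (ℓ : ℤ) := by
  have hrc : RCp C q G v := RCp_of_mem hv
  have hF := Fs_C (G := G) (q := q) hq hfe hv
  unfold Npb Npot clampI
  by_cases hrg : RGp Γ ℓ q G v
  · have h1 := Hs_ge_C hq hfe hv hrg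
    have h2 := Gs_ge_C hq hfe hv hrg
    rw [if_pos hrg, if_pos hrc, hF]
    omega
  · rw [if_neg hrg, if_pos hrc, hF]
    omega

end boundary

section lowermain
variable [Fintype V] {G : SimpleGraph V} {Γ : ℕ → Set V} {ℓ : ℕ} {C : Set V}

/-- The lower bound: every feasible `ϱ` dominates the half sum of min-cut areas. -/
lemma lower_bound (w : Sym2 V → ℝ) (hw : ∀ e, 0 ≤ w e) (hℓ : 1 ≤ ℓ)
    (ϱ : Sym2 V → ℚ) (hfe : RTN.Mfeas G Γ ℓ C ϱ) :
    ∑ k ∈ Finset.range ℓ,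
        (minCut G w {x | ∃ i ≤ k, x ∈ Γ i} ({x | ∃ i, k < i ∧ i ≤ ℓ ∧ x ∈ Γ i} ∪ C) +
         minCut G w {x | ∃ i, k < i ∧ i ≤ ℓ ∧ x ∈ Γ i} ({x | ∃ i ≤ k, x ∈ Γ i} ∪ C)) ≤
      2 * Mobj G w ϱ := by
  classical
  -- the doubled half-integer weights
  set q : Sym2 V → ℕ := fun e => (2 * ϱ e).num.toNat with hqdef
  have hq : ∀ e, (q e : ℚ) = 2 * ϱ e := by
    intro e
    obtain ⟨j, hj⟩ := hfe.1 e
    have h2 : 2 * ϱ e = (j : ℚ) := by rw [hj]; ring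
    rw [hqdef]
    simp only [h2]
    norm_cast
  have hϱ0 : ∀ e, 0 ≤ ϱ e := by
    intro e
    obtain ⟨j, hj⟩ := hfe.1 e
    rw [hj]; positivity
  set Na : V → ℤ := Npa Γ ℓ C q G with hNa
  set Nb : V → ℤ := Npb Γ ℓ C q G with hNb
  set Rα : ℕ → Set V := fun j => {v | Na v ≤ (j : ℤ)} with hRα
  set Rβ : ℕ → Set V := fun j => {v | Nb v ≤ (j : ℤ)} with hRβ
  -- cut validity
  have hcutα : ∀ k, k < ℓ → ∀ i, i < 4 →
      IsCut {x | ∃ i ≤ k, x ∈ Γ i} ({x | ∃ i, k < i ∧ i ≤ ℓ ∧ x ∈ Γ i} ∪ C) (Rα (4*k+i)) := by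
    intro k hk i hi
    constructor
    · rintro v ⟨i', hi', hv⟩
      have := Npa_boundary (G := G) hq hfe (le_trans hi' (le_of_lt hk)) hv
      simp only [hRα, Set.mem_setOf_eq, hNa, this]
      push_cast; omega
    · rintro v (⟨i', hk', hi', hv⟩ | hv) hvr
      · have := Npa_boundary (G := G) hq hfe hi' hv
        simp only [hRα, Set.mem_setOf_eq, hNa, this] at hvr
        push_cast at hvr; omega
      · have := Npa_C (G := G) (Γ := Γ) (ℓ := ℓ) hq hfe hv
        simp only [hRα, Set.mem_setOf_eq, hNa, this] at hvr
        push_cast at hvr; omega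
  have hcutβ : ∀ k, k < ℓ → ∀ i, i < 4 →
      IsCut {x | ∃ i, k < i ∧ i ≤ ℓ ∧ x ∈ Γ i} ({x | ∃ i ≤ k, x ∈ Γ i} ∪ C)
        (Rβ (4*(ℓ-1-k)+i)) := by
    intro k hk i hi
    constructor
    · rintro v ⟨i', hk', hi', hv⟩
      have := Npb_boundary (G := G) hq hfe hi' hv
      simp only [hRβ, Set.mem_setOf_eq, hNb, this]
      push_cast; omega
    · rintro v (⟨i', hi', hv⟩ | hv) hvr
      · have := Npb_boundary (G := G) hq hfe (le_trans hi' (le_of_lt hk)) hv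
        simp only [hRβ, Set.mem_setOf_eq, hNb, this] at hvr
        push_cast at hvr; omega
      · have := Npb_C (G := G) (Γ := Γ) (ℓ := ℓ) hq hfe hv
        simp only [hRβ, Set.mem_setOf_eq, hNb, this] at hvr
        push_cast at hvr; omega
  -- per-edge Lipschitz bound
  have hedge : ∀ x y : V, G.Adj x y →
      ((Na x - Na y).natAbs : ℤ) + ((Nb x - Nb y).natAbs : ℤ) ≤ 4 * (q s(x, y) : ℤ) :=
    fun x y h => Npot_edge h
  have hNa_rng : ∀ v, 0 ≤ Na v ∧ Na v ≤ 4 * (ℓ:ℤ) :=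
    fun v => ⟨Npot_nonneg ℓ _ _ _ _ _, Npot_le ℓ _ _ _ _ _⟩
  have hNb_rng : ∀ v, 0 ≤ Nb v ∧ Nb v ≤ 4 * (ℓ:ℤ) :=
    fun v => ⟨Npot_nonneg ℓ _ _ _ _ _, Npot_le ℓ _ _ _ _ _⟩
  -- level sum identity
  have hlevel : ∀ N : V → ℤ,
      ∑ j ∈ Finset.range (4*ℓ), wsum w (mu G {v | N v ≤ (j:ℤ)}) =
        ∑ e : Sym2 V,
          (((Finset.range (4*ℓ)).filter
            (fun j : ℕ => e ∈ mu G {v | N v ≤ (j:ℤ)})).card : ℝ) * w e := by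
    intro N
    rw [show ∑ j ∈ Finset.range (4*ℓ), wsum w (mu G {v | N v ≤ (j:ℤ)}) =
        ∑ j ∈ Finset.range (4*ℓ), ∑ e : Sym2 V, (if e ∈ mu G {v | N v ≤ (j:ℤ)} then w e else 0)
      from Finset.sum_congr rfl fun j _ => wsum_eq_sum_ite w _]
    rw [Finset.sum_comm]
    refine Finset.sum_congr rfl fun e _ => ?_
    rw [← Finset.sum_filter, Finset.sum_const, nsmul_eq_mul]
  -- count of crossed levels equals the potential jump
  have hcount : ∀ (N : V → ℤ), (∀ v, 0 ≤ N v ∧ N v ≤ 4 * (ℓ:ℤ)) → ∀ x y : V, G.Adj x y →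
      (((Finset.range (4*ℓ)).filter
        (fun j : ℕ => s(x,y) ∈ mu G {v | N v ≤ (j:ℤ)})).card : ℤ)
        = ((N x - N y).natAbs : ℤ) := by
    intro N hN x y h
    have hmem : ∀ j : ℕ, (s(x,y) ∈ mu G {v | N v ≤ (j:ℤ)}) ↔
        ((N x ≤ (j:ℤ) ∧ ¬ N y ≤ (j:ℤ)) ∨ (N y ≤ (j:ℤ) ∧ ¬ N x ≤ (j:ℤ))) := by
      intro j
      rw [mem_mu_iff h]
      simp [Set.mem_setOf_eq]
    have hflt : (Finset.range (4*ℓ)).filter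
          (fun j : ℕ => s(x,y) ∈ mu G {v | N v ≤ (j:ℤ)}) =
        Finset.Ico (min (N x) (N y)).toNat (max (N x) (N y)).toNat := by
      ext j
      simp only [Finset.mem_filter, Finset.mem_range, Finset.mem_Ico, hmem j]
      obtain ⟨h1, h2⟩ := hN x
      obtain ⟨h3, h4⟩ := hN y
      omega
    rw [hflt, Nat.card_Ico]
    obtain ⟨h1, h2⟩ := hN x
    obtain ⟨h3, h4⟩ := hN y
    omega
  -- count is zero off the edge set
  have hcount0 : ∀ (N : V → ℤ) (e : Sym2 V), e ∉ G.edgeSet →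
      ((Finset.range (4*ℓ)).filter (fun j : ℕ => e ∈ mu G {v | N v ≤ (j:ℤ)})).card = 0 := by
    intro N e he
    rw [Finset.card_eq_zero, Finset.filter_eq_empty_iff]
    exact fun _ _ => not_mem_mu he
  -- four levels per cut index
  have hA4 : ∀ k ∈ Finset.range ℓ,
      4 * minCut G w {x | ∃ i ≤ k, x ∈ Γ i} ({x | ∃ i, k < i ∧ i ≤ ℓ ∧ x ∈ Γ i} ∪ C) ≤
        wsum w (mu G (Rα (4*k))) + wsum w (mu G (Rα (4*k+1))) +
        wsum w (mu G (Rα (4*k+2))) + wsum w (mu G (Rα (4*k+3))) := by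
    intro k hk
    rw [Finset.mem_range] at hk
    have h0 := minCut_le (G := G) w (hcutα k hk 0 (by norm_num))
    have h1 := minCut_le (G := G) w (hcutα k hk 1 (by norm_num))
    have h2 := minCut_le (G := G) w (hcutα k hk 2 (by norm_num))
    have h3 := minCut_le (G := G) w (hcutα k hk 3 (by norm_num))
    simp only [Nat.add_zero] at h0
    linarith
  have hB4 : ∀ k ∈ Finset.range ℓ,
      4 * minCut G w {x | ∃ i, k < i ∧ i ≤ ℓ ∧ x ∈ Γ i} ({x | ∃ i ≤ k, x ∈ Γ i} ∪ C) ≤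
        wsum w (mu G (Rβ (4*(ℓ-1-k)))) + wsum w (mu G (Rβ (4*(ℓ-1-k)+1))) +
        wsum w (mu G (Rβ (4*(ℓ-1-k)+2))) + wsum w (mu G (Rβ (4*(ℓ-1-k)+3))) := by
    intro k hk
    rw [Finset.mem_range] at hk
    have h0 := minCut_le (G := G) w (hcutβ k hk 0 (by norm_num))
    have h1 := minCut_le (G := G) w (hcutβ k hk 1 (by norm_num))
    have h2 := minCut_le (G := G) w (hcutβ k hk 2 (by norm_num))
    have h3 := minCut_le (G := G) w (hcutβ k hk 3 (by norm_num))
    simp only [Nat.add_zero] at h0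
    linarith
  -- reindex the β sums
  have hBsum : ∑ k ∈ Finset.range ℓ,
        (wsum w (mu G (Rβ (4*(ℓ-1-k)))) + wsum w (mu G (Rβ (4*(ℓ-1-k)+1))) +
         wsum w (mu G (Rβ (4*(ℓ-1-k)+2))) + wsum w (mu G (Rβ (4*(ℓ-1-k)+3)))) =
      ∑ k ∈ Finset.range ℓ,
        (wsum w (mu G (Rβ (4*k))) + wsum w (mu G (Rβ (4*k+1))) +
         wsum w (mu G (Rβ (4*k+2))) + wsum w (mu G (Rβ (4*k+3)))) :=
    Finset.sum_range_reflect
      (fun k => wsum w (mu G (Rβ (4*k))) + wsum w (mu G (Rβ (4*k+1))) +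
         wsum w (mu G (Rβ (4*k+2))) + wsum w (mu G (Rβ (4*k+3)))) ℓ
  -- assemble
  have hsumα : ∑ j ∈ Finset.range (4*ℓ), wsum w (mu G (Rα j)) =
      ∑ k ∈ Finset.range ℓ,
        (wsum w (mu G (Rα (4*k))) + wsum w (mu G (Rα (4*k+1))) +
         wsum w (mu G (Rα (4*k+2))) + wsum w (mu G (Rα (4*k+3)))) :=
    sum_range_four _ ℓ
  have hsumβ : ∑ j ∈ Finset.range (4*ℓ), wsum w (mu G (Rβ j)) =
      ∑ k ∈ Finset.range ℓ,
        (wsum w (mu G (Rβ (4*k))) + wsum w (mu G (Rβ (4*k+1))) +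
         wsum w (mu G (Rβ (4*k+2))) + wsum w (mu G (Rβ (4*k+3)))) :=
    sum_range_four _ ℓ
  have hMobj := wsum_eq_sum_ite (fun e => w e * ((ϱ e : ℚ) : ℝ)) G.edgeSet
  have htot : ∑ j ∈ Finset.range (4*ℓ), wsum w (mu G (Rα j)) +
      ∑ j ∈ Finset.range (4*ℓ), wsum w (mu G (Rβ j)) ≤ 8 * Mobj G w ϱ := by
    rw [hlevel Na, hlevel Nb, ← Finset.sum_add_distrib]
    rw [show Mobj G w ϱ = _ from hMobj, Finset.mul_sum]
    refine Finset.sum_le_sum fun e _ => ?_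
    by_cases he : e ∈ G.edgeSet
    · rw [if_pos he]
      induction e using Sym2.inductionOn with
      | hf x y =>
        have hadj : G.Adj x y := he
        have hca := hcount Na hNa_rng x y hadj
        have hcb := hcount Nb hNb_rng x y hadj
        have hed : ((Na x - Na y).natAbs : ℤ) + ((Nb x - Nb y).natAbs : ℤ)
            ≤ 4 * (q s(x, y) : ℤ) := Npot_edge hadj
        have hqe : ((q s(x,y) : ℕ) : ℝ) = 2 * ((ϱ s(x,y) : ℚ) : ℝ) := by
          have h1 := hq s(x,y)
          exact_mod_cast congrArg (fun t : ℚ => (t : ℝ)) h1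
        have hcnt : (((Finset.range (4*ℓ)).filter
              (fun j : ℕ => s(x,y) ∈ mu G {v | Na v ≤ (j:ℤ)})).card : ℝ) +
            (((Finset.range (4*ℓ)).filter
              (fun j : ℕ => s(x,y) ∈ mu G {v | Nb v ≤ (j:ℤ)})).card : ℝ)
            ≤ 4 * ((q s(x,y) : ℕ) : ℝ) := by
          have hz : (((Finset.range (4*ℓ)).filter
              (fun j : ℕ => s(x,y) ∈ mu G {v | Na v ≤ (j:ℤ)})).card : ℤ) +
              (((Finset.range (4*ℓ)).filter
              (fun j : ℕ => s(x,y) ∈ mu G {v | Nb v ≤ (j:ℤ)})).card : ℤ)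
              ≤ 4 * (q s(x,y) : ℤ) := by
            rw [hca, hcb]; exact hed
          exact_mod_cast hz
        have hwge := hw s(x,y)
        have := mul_le_mul_of_nonneg_right hcnt hwge
        rw [hqe] at this
        nlinarith [this]
    · rw [if_neg he]
      have hz1 := hcount0 Na e he
      have hz2 := hcount0 Nb e he
      simp only [hz1, hz2]
      simp
  have hmain : ∑ k ∈ Finset.range ℓ,
      (4 * minCut G w {x | ∃ i ≤ k, x ∈ Γ i} ({x | ∃ i, k < i ∧ i ≤ ℓ ∧ x ∈ Γ i} ∪ C) +
       4 * minCut G w {x | ∃ i, k < i ∧ i ≤ ℓ ∧ x ∈ Γ i} ({x | ∃ i ≤ k, x ∈ Γ i} ∪ C)) ≤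
      8 * Mobj G w ϱ := by
    calc ∑ k ∈ Finset.range ℓ,
        (4 * minCut G w {x | ∃ i ≤ k, x ∈ Γ i} ({x | ∃ i, k < i ∧ i ≤ ℓ ∧ x ∈ Γ i} ∪ C) +
         4 * minCut G w {x | ∃ i, k < i ∧ i ≤ ℓ ∧ x ∈ Γ i} ({x | ∃ i ≤ k, x ∈ Γ i} ∪ C)) ≤
        ∑ k ∈ Finset.range ℓ,
          ((wsum w (mu G (Rα (4*k))) + wsum w (mu G (Rα (4*k+1))) +
            wsum w (mu G (Rα (4*k+2))) + wsum w (mu G (Rα (4*k+3)))) +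
           (wsum w (mu G (Rβ (4*(ℓ-1-k)))) + wsum w (mu G (Rβ (4*(ℓ-1-k)+1))) +
            wsum w (mu G (Rβ (4*(ℓ-1-k)+2))) + wsum w (mu G (Rβ (4*(ℓ-1-k)+3))))) :=
          Finset.sum_le_sum fun k hk => add_le_add (hA4 k hk) (hB4 k hk)
      _ = ∑ j ∈ Finset.range (4*ℓ), wsum w (mu G (Rα j)) +
          ∑ j ∈ Finset.range (4*ℓ), wsum w (mu G (Rβ j)) := by
          rw [Finset.sum_add_distrib, hBsum, hsumα, hsumβ]
      _ ≤ 8 * Mobj G w ϱ := htot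
  have hfac : ∑ k ∈ Finset.range ℓ,
      (4 * minCut G w {x | ∃ i ≤ k, x ∈ Γ i} ({x | ∃ i, k < i ∧ i ≤ ℓ ∧ x ∈ Γ i} ∪ C) +
       4 * minCut G w {x | ∃ i, k < i ∧ i ≤ ℓ ∧ x ∈ Γ i} ({x | ∃ i ≤ k, x ∈ Γ i} ∪ C)) =
      4 * ∑ k ∈ Finset.range ℓ,
      (minCut G w {x | ∃ i ≤ k, x ∈ Γ i} ({x | ∃ i, k < i ∧ i ≤ ℓ ∧ x ∈ Γ i} ∪ C) +
       minCut G w {x | ∃ i, k < i ∧ i ≤ ℓ ∧ x ∈ Γ i} ({x | ∃ i ≤ k, x ∈ Γ i} ∪ C)) := by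
    rw [Finset.mul_sum]
    exact Finset.sum_congr rfl fun k _ => by ring
  rw [hfac] at hmain
  linarith

end lowermain

section uppermain
variable [Fintype V] {G : SimpleGraph V} {Γ : ℕ → Set V} {ℓ : ℕ} {C : Set V}

lemma wkSum_add {G : SimpleGraph V} (f g : Sym2 V → ℕ) {x y : V} (p : G.Walk x y) :
    wkSum (fun e => f e + g e) p = wkSum f p + wkSum g p := by
  induction p with
  | nil => simp [wkSum]
  | @cons a b c h p ih =>
      rw [wkSum_cons (f := fun e => f e + g e), ih, wkSum_cons f, wkSum_cons g]
      ring

/-- The upper bound: a feasible `ϱ` from a family of cuts. -/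
lemma upper_bound (w : Sym2 V → ℝ) (α β : ℕ → Set V)
    (hα : ∀ k, k < ℓ → IsCut {x | ∃ i ≤ k, x ∈ Γ i}
      ({x | ∃ i, k < i ∧ i ≤ ℓ ∧ x ∈ Γ i} ∪ C) (α k))
    (hβ : ∀ k, k < ℓ → IsCut {x | ∃ i, k < i ∧ i ≤ ℓ ∧ x ∈ Γ i}
      ({x | ∃ i ≤ k, x ∈ Γ i} ∪ C) (β k)) :
    ∃ ϱ : Sym2 V → ℚ, RTN.Mfeas G Γ ℓ C ϱ ∧
      Mobj G w ϱ =
        (∑ k ∈ Finset.range ℓ, (wsum w (mu G (α k)) + wsum w (mu G (β k)))) / 2 := by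
  classical
  -- membership characterizations
  have hmemα : ∀ a, a ≤ ℓ → ∀ x ∈ Γ a, ∀ k, k < ℓ → (x ∈ α k ↔ a ≤ k) := by
    intro a ha x hx k hk
    constructor
    · intro hxk
      by_contra hak
      exact (hα k hk).2 (Or.inl ⟨a, by omega, ha, hx⟩) hxk
    · intro hak
      exact (hα k hk).1 ⟨a, hak, hx⟩
  have hmemβ : ∀ a, a ≤ ℓ → ∀ x ∈ Γ a, ∀ k, k < ℓ → (x ∈ β k ↔ k < a) := by
    intro a ha x hx k hk
    constructor
    · intro hxk
      by_contra hak
      exact (hβ k hk).2 (Or.inl ⟨a, by omega, hx⟩) hxk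
    · intro hak
      exact (hβ k hk).1 ⟨a, hak, ha, hx⟩
  have hmemαC : ∀ x ∈ C, ∀ k, k < ℓ → x ∉ α k := by
    intro x hx k hk
    exact (hα k hk).2 (Or.inr hx)
  have hmemβC : ∀ x ∈ C, ∀ k, k < ℓ → x ∉ β k := by
    intro x hx k hk
    exact (hβ k hk).2 (Or.inr hx)
  -- the counting function and candidate ϱ
  set cnt : Sym2 V → ℕ := fun e => ∑ k ∈ Finset.range ℓ,
    ((if e ∈ mu G (α k) then 1 else 0) + (if e ∈ mu G (β k) then 1 else 0)) with hcnt
  set ϱ : Sym2 V → ℚ := fun e => (cnt e : ℚ) / 2 with hϱ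
  have hg : ∀ e, ((cnt e : ℕ) : ℚ) = 2 * ϱ e := by
    intro e; rw [hϱ]; ring
  -- decomposition of walk sums
  have hdecomp : ∀ {x y : V} (W : G.Walk x y),
      wkSum cnt W = ∑ k ∈ Finset.range ℓ,
        (wkSum (fun e => if e ∈ mu G (α k) then (1:ℕ) else 0) W +
         wkSum (fun e => if e ∈ mu G (β k) then (1:ℕ) else 0) W) := by
    intro x y W
    rw [hcnt]
    rw [wkSum_sum (Finset.range ℓ)
      (fun k e => ((if e ∈ mu G (α k) then 1 else 0) + (if e ∈ mu G (β k) then 1 else 0))) W]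
    exact Finset.sum_congr rfl fun k _ => wkSum_add _ _ W
  refine ⟨ϱ, ⟨fun e => ⟨cnt e, rfl⟩, ?_, ?_⟩, ?_⟩
  · -- pair separation constraints
    intro a b ha hb x hx y hy W
    have hsep : ∀ k ∈ Finset.range ℓ, ∃ j : ℕ,
        wkSum (fun e => if e ∈ mu G (α k) then (1:ℕ) else 0) W +
        wkSum (fun e => if e ∈ mu G (β k) then (1:ℕ) else 0) W =
          2 * (if (a ≤ k) ↔ (b ≤ k) then 0 else 1) + 2 * j := by
      intro k hk
      rw [Finset.mem_range] at hk
      obtain ⟨j1, hj1⟩ := walk_cross (α k) W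
      obtain ⟨j2, hj2⟩ := walk_cross (β k) W
      refine ⟨j1 + j2, ?_⟩
      rw [hj1, hj2]
      have e1 : ((x ∈ α k) ↔ (y ∈ α k)) ↔ ((a ≤ k) ↔ (b ≤ k)) := by
        rw [hmemα a ha x hx k hk, hmemα b hb y hy k hk]
      have e2 : ((x ∈ β k) ↔ (y ∈ β k)) ↔ ((a ≤ k) ↔ (b ≤ k)) := by
        rw [hmemβ a ha x hx k hk, hmemβ b hb y hy k hk]
        constructor
        · intro h; omega
        · intro h; omega
      rw [if_congr e1 rfl rfl, if_congr e2 rfl rfl]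
      ring
    choose jf hjf using hsep
    have hWsum : wkSum cnt W = 2 * (min (max a b) ℓ - min (min a b) ℓ) +
        2 * ∑ k ∈ (Finset.range ℓ).attach, jf k.1 k.2 := by
      rw [hdecomp W, ← Finset.sum_attach (Finset.range ℓ)]
      rw [show ∀ s : Finset {x // x ∈ Finset.range ℓ},
        ∑ k ∈ s, (wkSum (fun e => if e ∈ mu G (α k.1) then (1:ℕ) else 0) W +
         wkSum (fun e => if e ∈ mu G (β k.1) then (1:ℕ) else 0) W) =
        ∑ k ∈ s, (2 * (if (a ≤ k.1) ↔ (b ≤ k.1) then 0 else 1) + 2 * jf k.1 k.2)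
        from fun s => Finset.sum_congr rfl fun k _ => hjf k.1 k.2]
      rw [Finset.sum_add_distrib, ← Finset.mul_sum, ← Finset.mul_sum]
      congr 1
      rw [Finset.sum_attach (Finset.range ℓ)
        (fun k => (if (a ≤ k) ↔ (b ≤ k) then (0:ℕ) else 1)), count_sep]
    refine ⟨∑ k ∈ (Finset.range ℓ).attach, jf k.1 k.2, ?_⟩
    rw [wkSum_half ϱ cnt hg W, hWsum]
    have habs : |(a : ℚ) - (b : ℚ)| = ((min (max a b) ℓ - min (min a b) ℓ : ℕ) : ℚ) := by
      rcases le_total a b with h | h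
      · have h1 : min (max a b) ℓ - min (min a b) ℓ = b - a := by omega
        have h2 : ((a:ℚ)) ≤ (b:ℚ) := by exact_mod_cast h
        rw [h1, Nat.cast_sub h, abs_sub_comm, abs_of_nonneg (sub_nonneg.2 h2)]
      · have h1 : min (max a b) ℓ - min (min a b) ℓ = a - b := by omega
        have h2 : ((b:ℚ)) ≤ (a:ℚ) := by exact_mod_cast h
        rw [h1, Nat.cast_sub h, abs_of_nonneg (sub_nonneg.2 h2)]
    rw [habs]
    push_cast
    ring
  · -- boundary-to-C constraints
    intro a ha x hx y hy W
    have hsep : ∀ k ∈ Finset.range ℓ, ∃ j : ℕ,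
        wkSum (fun e => if e ∈ mu G (α k) then (1:ℕ) else 0) W +
        wkSum (fun e => if e ∈ mu G (β k) then (1:ℕ) else 0) W = 1 + 2 * j := by
      intro k hk
      rw [Finset.mem_range] at hk
      obtain ⟨j1, hj1⟩ := walk_cross (α k) W
      obtain ⟨j2, hj2⟩ := walk_cross (β k) W
      refine ⟨j1 + j2, ?_⟩
      rw [hj1, hj2]
      have e1 : ((x ∈ α k) ↔ (y ∈ α k)) ↔ ¬ (a ≤ k) := by
        rw [hmemα a ha x hx k hk]
        simp [hmemαC y hy k hk]
      have e2 : ((x ∈ β k) ↔ (y ∈ β k)) ↔ (a ≤ k) := by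
        rw [hmemβ a ha x hx k hk]
        have h2 := hmemβC y hy k hk
        constructor
        · intro h
          by_contra hak
          exact h2 (h.1 (by omega))
        · intro h
          constructor
          · intro h3; omega
          · intro h3; exact absurd h3 h2
      rw [if_congr e1 rfl rfl, if_congr e2 rfl rfl]
      by_cases h : a ≤ k
      · rw [if_neg (by simpa using h), if_pos h]
        ring
      · rw [if_pos (by simpa using h), if_neg h]
        ring
    choose jf hjf using hsep
    have hWsum : wkSum cnt W = ℓ + 2 * ∑ k ∈ (Finset.range ℓ).attach, jf k.1 k.2 := by
      rw [hdecomp W, ← Finset.sum_attach (Finset.range ℓ)]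
      rw [show ∀ s : Finset {x // x ∈ Finset.range ℓ},
        ∑ k ∈ s, (wkSum (fun e => if e ∈ mu G (α k.1) then (1:ℕ) else 0) W +
         wkSum (fun e => if e ∈ mu G (β k.1) then (1:ℕ) else 0) W) =
        ∑ k ∈ s, (1 + 2 * jf k.1 k.2)
        from fun s => Finset.sum_congr rfl fun k _ => hjf k.1 k.2]
      rw [Finset.sum_add_distrib, ← Finset.mul_sum, Finset.sum_const,
        Finset.card_attach, Finset.card_range]
      ring
    refine ⟨∑ k ∈ (Finset.range ℓ).attach, jf k.1 k.2, ?_⟩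
    rw [wkSum_half ϱ cnt hg W, hWsum]
    push_cast
    ring
  · -- objective value
    have hϱR : ∀ e, ((ϱ e : ℚ) : ℝ) = ((cnt e : ℕ) : ℝ) / 2 := by
      intro e; rw [hϱ]; push_cast; ring
    have step1 : Mobj G w ϱ =
        ∑ e : Sym2 V, (if e ∈ G.edgeSet then w e * ((ϱ e : ℚ) : ℝ) else 0) := by
      rw [show Mobj G w ϱ = wsum (fun e => w e * ((ϱ e : ℚ) : ℝ)) G.edgeSet from rfl,
        wsum_eq_sum_ite]
      exact Finset.sum_congr rfl fun e _ => by congr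
    rw [step1]
    have step2 : ∀ e : Sym2 V, (if e ∈ G.edgeSet then w e * ((ϱ e : ℚ) : ℝ) else 0) =
        (∑ k ∈ Finset.range ℓ, ((if e ∈ mu G (α k) then w e else 0) +
          (if e ∈ mu G (β k) then w e else 0))) / 2 := by
      intro e
      by_cases he : e ∈ G.edgeSet
      · rw [if_pos he, hϱR]
        have hc : ((cnt e : ℕ) : ℝ) = ∑ k ∈ Finset.range ℓ,
            ((if e ∈ mu G (α k) then (1:ℝ) else 0) + (if e ∈ mu G (β k) then (1:ℝ) else 0)) := by
          rw [hcnt]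
          push_cast
          refine Finset.sum_congr rfl fun k _ => ?_
          by_cases h1 : e ∈ mu G (α k) <;> by_cases h2 : e ∈ mu G (β k) <;>
            simp [h1, h2]
        rw [hc, ← mul_div_assoc, Finset.mul_sum]
        congr 1
        refine Finset.sum_congr rfl fun k _ => ?_
        by_cases h1 : e ∈ mu G (α k) <;> by_cases h2 : e ∈ mu G (β k) <;>
          simp [h1, h2] <;> ring
      · rw [if_neg he]
        symm
        rw [div_eq_zero_iff]
        left
        refine Finset.sum_eq_zero fun k _ => ?_
        rw [if_neg (not_mem_mu he), if_neg (not_mem_mu he)]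
        ring
    rw [Finset.sum_congr rfl fun e _ => step2 e, ← Finset.sum_div]
    congr 1
    rw [Finset.sum_comm]
    refine Finset.sum_congr rfl fun k _ => ?_
    rw [wsum_eq_sum_ite, wsum_eq_sum_ite, Finset.sum_add_distrib]

end uppermain

end ICP
/-- The optimal value of the `ℓ`-intersecting cut problem is the half
sum of minimal cut areas
`M = ½ Σ_{k=0}^{ℓ-1} [𝒜((Γ₀∪…∪Γ_k):(Γ_{k+1}∪…∪Γ_ℓ∪C)) + 𝒜((Γ_{k+1}∪…∪Γ_ℓ):(Γ₀∪…∪Γ_k∪C))]`,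
where for each `k` the minimizing cuts `α_k`, `β_k` can be chosen disjoint. -/
theorem intersecting_cut_value {V : Type*} [Fintype V] (G : SimpleGraph V)
    (w : Sym2 V → ℝ) (hw : ∀ e, 0 ≤ w e) (ℓ : ℕ) (hℓ : 1 ≤ ℓ)
    (Γ : ℕ → Set V) (C : Set V)
    (hdisj : ∀ i j, i ≤ ℓ → j ≤ ℓ → i ≠ j → Disjoint (Γ i) (Γ j))
    (hdisjC : ∀ i, i ≤ ℓ → Disjoint (Γ i) C) :
    ∃ α β : ℕ → Set V,
      (∀ k < ℓ,
        RTN.IsCut {x | ∃ i ≤ k, x ∈ Γ i}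
          ({x | ∃ i, k < i ∧ i ≤ ℓ ∧ x ∈ Γ i} ∪ C) (α k) ∧
        RTN.wsum w (RTN.mu G (α k)) =
          RTN.minCut G w {x | ∃ i ≤ k, x ∈ Γ i}
            ({x | ∃ i, k < i ∧ i ≤ ℓ ∧ x ∈ Γ i} ∪ C) ∧
        RTN.IsCut {x | ∃ i, k < i ∧ i ≤ ℓ ∧ x ∈ Γ i}
          ({x | ∃ i ≤ k, x ∈ Γ i} ∪ C) (β k) ∧
        RTN.wsum w (RTN.mu G (β k)) =
          RTN.minCut G w {x | ∃ i, k < i ∧ i ≤ ℓ ∧ x ∈ Γ i}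
            ({x | ∃ i ≤ k, x ∈ Γ i} ∪ C) ∧
        Disjoint (α k) (β k)) ∧
      RTN.Mval G w Γ ℓ C =
        (∑ k ∈ Finset.range ℓ,
          (RTN.wsum w (RTN.mu G (α k)) + RTN.wsum w (RTN.mu G (β k)))) / 2 := by
  classical
  -- disjointness of the boundary set pairs
  have hdXY : ∀ k, k < ℓ → Disjoint {x | ∃ i ≤ k, x ∈ Γ i}
      ({x | ∃ i, k < i ∧ i ≤ ℓ ∧ x ∈ Γ i} ∪ C) := by
    intro k hk
    rw [Set.disjoint_left]
    rintro v ⟨i, hik, hv⟩ (⟨i', hki', hi'l, hv'⟩ | hvC)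
    · exact (hdisj i i' (by omega) hi'l (by omega)).ne_of_mem hv hv' rfl
    · exact (hdisjC i (by omega)).ne_of_mem hv hvC rfl
  have hdXY' : ∀ k, k < ℓ → Disjoint {x | ∃ i, k < i ∧ i ≤ ℓ ∧ x ∈ Γ i}
      ({x | ∃ i ≤ k, x ∈ Γ i} ∪ C) := by
    intro k hk
    rw [Set.disjoint_left]
    rintro v ⟨i, hki, hil, hv⟩ (⟨i', hi'k, hv'⟩ | hvC)
    · exact (hdisj i i' hil (by omega) (by omega)).ne_of_mem hv hv' rfl
    · exact (hdisjC i hil).ne_of_mem hv hvC rfl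
  -- choose disjoint minimal cut pairs
  have hex : ∀ k, ∃ ab : Set V × Set V, k < ℓ →
      (RTN.IsCut {x | ∃ i ≤ k, x ∈ Γ i}
          ({x | ∃ i, k < i ∧ i ≤ ℓ ∧ x ∈ Γ i} ∪ C) ab.1 ∧
        RTN.wsum w (RTN.mu G ab.1) =
          RTN.minCut G w {x | ∃ i ≤ k, x ∈ Γ i}
            ({x | ∃ i, k < i ∧ i ≤ ℓ ∧ x ∈ Γ i} ∪ C) ∧
        RTN.IsCut {x | ∃ i, k < i ∧ i ≤ ℓ ∧ x ∈ Γ i}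
          ({x | ∃ i ≤ k, x ∈ Γ i} ∪ C) ab.2 ∧
        RTN.wsum w (RTN.mu G ab.2) =
          RTN.minCut G w {x | ∃ i, k < i ∧ i ≤ ℓ ∧ x ∈ Γ i}
            ({x | ∃ i ≤ k, x ∈ Γ i} ∪ C) ∧
        Disjoint ab.1 ab.2) := by
    intro k
    by_cases hk : k < ℓ
    · obtain ⟨a, b, h1, h2, h3, h4, h5⟩ :=
        ICP.exists_disjoint_mincuts (G := G) w hw (hdXY k hk) (hdXY' k hk)
          Set.subset_union_left Set.subset_union_left
      exact ⟨(a, b), fun _ => ⟨h1, h2, h3, h4, h5⟩⟩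
    · exact ⟨(∅, ∅), fun h => absurd h hk⟩
  choose f hf using hex
  refine ⟨fun k => (f k).1, fun k => (f k).2, fun k hk => hf k hk, ?_⟩
  -- the feasible ϱ built from the cuts
  obtain ⟨ϱ₀, hfeas₀, hobj₀⟩ :=
    ICP.upper_bound (G := G) (Γ := Γ) (ℓ := ℓ) (C := C) w (fun k => (f k).1) (fun k => (f k).2)
      (fun k hk => (hf k hk).1) (fun k hk => (hf k hk).2.2.1)
  -- nonnegativity of the objective
  have hnonneg : ∀ ϱ : Sym2 V → ℚ, RTN.Mfeas G Γ ℓ C ϱ → 0 ≤ RTN.Mobj G w ϱ := by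
    intro ϱ hfe
    refine Finset.sum_nonneg fun e _ => ?_
    obtain ⟨j, hj⟩ := hfe.1 e
    have : (0:ℝ) ≤ ((ϱ e : ℚ) : ℝ) := by rw [hj]; positivity
    exact mul_nonneg (hw e) this
  have hbdd : BddBelow {a | ∃ ϱ : Sym2 V → ℚ, RTN.Mfeas G Γ ℓ C ϱ ∧ a = RTN.Mobj G w ϱ} := by
    refine ⟨0, ?_⟩
    rintro a ⟨ϱ, hfe, rfl⟩
    exact hnonneg ϱ hfe
  have hmem : RTN.Mobj G w ϱ₀ ∈
      {a | ∃ ϱ : Sym2 V → ℚ, RTN.Mfeas G Γ ℓ C ϱ ∧ a = RTN.Mobj G w ϱ} := ⟨ϱ₀, hfeas₀, rfl⟩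
  -- identify the cut areas with the min cuts
  have hsum_eq : ∑ k ∈ Finset.range ℓ,
      (RTN.wsum w (RTN.mu G ((f k).1)) + RTN.wsum w (RTN.mu G ((f k).2))) =
      ∑ k ∈ Finset.range ℓ,
      (RTN.minCut G w {x | ∃ i ≤ k, x ∈ Γ i} ({x | ∃ i, k < i ∧ i ≤ ℓ ∧ x ∈ Γ i} ∪ C) +
       RTN.minCut G w {x | ∃ i, k < i ∧ i ≤ ℓ ∧ x ∈ Γ i} ({x | ∃ i ≤ k, x ∈ Γ i} ∪ C)) := by
    refine Finset.sum_congr rfl fun k hk => ?_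
    rw [Finset.mem_range] at hk
    rw [(hf k hk).2.1, (hf k hk).2.2.2.1]
  apply le_antisymm
  · -- upper bound
    have h1 : RTN.Mval G w Γ ℓ C ≤ RTN.Mobj G w ϱ₀ := csInf_le hbdd hmem
    rw [hobj₀] at h1
    exact h1
  · -- lower bound
    refine le_csInf ⟨_, hmem⟩ ?_
    rintro a ⟨ϱ, hfe, rfl⟩
    have h2 := ICP.lower_bound (G := G) (Γ := Γ) (C := C) w hw hℓ ϱ hfe
    rw [← hsum_eq] at h2
    linarith
end
end

section
/- Let G=(V,E) be a weighted graph with boundary ∂=A⊔B⊔C in which every connected component contains a boundary vertex, and fix integers n≥2 and even m≥2. Let g:V→S_{mn} be an optimal configuration for the permutation optimization R, and suppose the minimal cut r_{AB} for A∪B:C is unique. Then g(v)=id for every vertex v∈V∖r_{AB}. -/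
open scoped Classical

noncomputable section

namespace RTNAux

open RTN Equiv Function

variable {α : Type*}

/-- The setoid relating `x` and `y` and nothing else. -/
def pairS (x y : α) : Setoid α where
  r u v := u = v ∨ (u = x ∧ v = y) ∨ (u = y ∧ v = x)
  iseqv := by
    refine ⟨fun u => Or.inl rfl, ?_, ?_⟩
    · rintro u v (h | ⟨h1, h2⟩ | ⟨h1, h2⟩) <;> subst_vars <;> tauto
    · rintro u v w (h | ⟨h1, h2⟩ | ⟨h1, h2⟩) (h' | ⟨h1', h2'⟩ | ⟨h1', h2'⟩) <;>
        subst_vars <;> tauto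

/-- Explicit description of the join of a setoid with `pairS x y`. -/
def joinPair (p : Setoid α) (x y : α) : Setoid α where
  r u v := p.r u v ∨ (p.r u x ∧ p.r y v) ∨ (p.r u y ∧ p.r x v)
  iseqv := by
    refine ⟨fun u => Or.inl (p.iseqv.refl u), ?_, ?_⟩
    · rintro u v (h | ⟨h1, h2⟩ | ⟨h1, h2⟩)
      · exact Or.inl (p.iseqv.symm h)
      · exact Or.inr (Or.inr ⟨p.iseqv.symm h2, p.iseqv.symm h1⟩)
      · exact Or.inr (Or.inl ⟨p.iseqv.symm h2, p.iseqv.symm h1⟩)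
    · rintro u v w (h | ⟨h1, h2⟩ | ⟨h1, h2⟩) (h' | ⟨h1', h2'⟩ | ⟨h1', h2'⟩)
      · exact Or.inl (p.iseqv.trans h h')
      · exact Or.inr (Or.inl ⟨p.iseqv.trans h h1', h2'⟩)
      · exact Or.inr (Or.inr ⟨p.iseqv.trans h h1', h2'⟩)
      · exact Or.inr (Or.inl ⟨h1, p.iseqv.trans h2 h'⟩)
      · exact Or.inl (p.iseqv.trans h1
          (p.iseqv.trans (p.iseqv.symm (p.iseqv.trans h2 h1')) h2'))
      · exact Or.inl (p.iseqv.trans h1 h2')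
      · exact Or.inr (Or.inr ⟨h1, p.iseqv.trans h2 h'⟩)
      · exact Or.inl (p.iseqv.trans h1 h2')
      · exact Or.inl (p.iseqv.trans h1
          (p.iseqv.trans (p.iseqv.symm (p.iseqv.trans h2 h1')) h2'))

lemma sup_pair (p : Setoid α) (x y : α) : p ⊔ pairS x y = joinPair p x y := by
  apply le_antisymm
  · apply sup_le
    · intro u v h; exact Or.inl h
    · rintro u v (h | ⟨h1, h2⟩ | ⟨h1, h2⟩) <;> subst_vars
      · exact Or.inl (p.iseqv.refl _)
      · exact Or.inr (Or.inl ⟨p.iseqv.refl _, p.iseqv.refl _⟩)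
      · exact Or.inr (Or.inr ⟨p.iseqv.refl _, p.iseqv.refl _⟩)
  · intro u v h
    have hpx : ∀ a b, p.r a b → (p ⊔ pairS x y).r a b := fun a b hab =>
      (le_sup_left : p ≤ p ⊔ pairS x y) hab
    have hxy : (p ⊔ pairS x y).r x y :=
      (le_sup_right : pairS x y ≤ p ⊔ pairS x y) (Or.inr (Or.inl ⟨rfl, rfl⟩))
    rcases h with h | ⟨h1, h2⟩ | ⟨h1, h2⟩
    · exact hpx _ _ h
    · exact (p ⊔ pairS x y).iseqv.trans (hpx _ _ h1)
        ((p ⊔ pairS x y).iseqv.trans hxy (hpx _ _ h2))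
    · exact (p ⊔ pairS x y).iseqv.trans (hpx _ _ h1)
        ((p ⊔ pairS x y).iseqv.trans ((p ⊔ pairS x y).iseqv.symm hxy) (hpx _ _ h2))


section Counting

variable [Finite α]

lemma nb_nonneg (p : Setoid α) : 0 ≤ nb p := Int.ofNat_nonneg _

lemma nb_le_of_le {p q : Setoid α} (h : p ≤ q) : nb q ≤ nb p := by
  have : Function.Surjective
      (Quotient.map (fun a => a) (fun a b hab => h hab) : Quotient p → Quotient q) := by
    intro b
    obtain ⟨u, rfl⟩ := Quotient.exists_rep b
    exact ⟨Quotient.mk p u, rfl⟩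
  unfold nb
  exact_mod_cast Nat.card_le_card_of_surjective _ this

/-- The natural map to the quotient by the join with a pair. -/
def pairMap (p : Setoid α) (x y : α) : Quotient p → Quotient (p ⊔ pairS x y) :=
  Quotient.map (fun a => a)
    (fun a b hab => (le_sup_left : p ≤ p ⊔ pairS x y) hab)

lemma pairMap_mk (p : Setoid α) (x y u : α) :
    pairMap p x y (Quotient.mk p u) = Quotient.mk (p ⊔ pairS x y) u := rfl

lemma pairMap_surjective (p : Setoid α) (x y : α) :
    Function.Surjective (pairMap p x y) := by
  intro b
  obtain ⟨u, rfl⟩ := Quotient.exists_rep b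
  exact ⟨Quotient.mk p u, rfl⟩

lemma pairMap_eq (p : Setoid α) (x y : α) (a b : Quotient p)
    (hab : pairMap p x y a = pairMap p x y b) :
    a = b ∨ (a = Quotient.mk p x ∧ b = Quotient.mk p y) ∨
      (a = Quotient.mk p y ∧ b = Quotient.mk p x) := by
  obtain ⟨u, rfl⟩ := Quotient.exists_rep a
  obtain ⟨v, rfl⟩ := Quotient.exists_rep b
  rw [pairMap_mk, pairMap_mk] at hab
  have h : (p ⊔ pairS x y).r u v := Quotient.exact hab
  rw [sup_pair p x y] at h
  rcases h with h | ⟨h1, h2⟩ | ⟨h1, h2⟩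
  · exact Or.inl (Quotient.sound h)
  · exact Or.inr (Or.inl ⟨Quotient.sound h1, Quotient.sound (p.iseqv.symm h2)⟩)
  · exact Or.inr (Or.inr ⟨Quotient.sound h1, Quotient.sound (p.iseqv.symm h2)⟩)

lemma nb_sup_pair_ge (p : Setoid α) (x y : α) :
    nb p - 1 ≤ nb (p ⊔ pairS x y) := by
  classical
  have hinj : Function.Injective
      (fun a : {a : Quotient p // a ≠ Quotient.mk p x} => pairMap p x y a.1) := by
    rintro ⟨a, ha⟩ ⟨b, hb⟩ hab
    rcases pairMap_eq p x y a b hab with h | ⟨h1, _⟩ | ⟨_, h2⟩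
    · exact Subtype.ext h
    · exact absurd h1 ha
    · exact absurd h2 hb
  have h1 : Nat.card {a : Quotient p // a ≠ Quotient.mk p x} ≤
      Nat.card (Quotient (p ⊔ pairS x y)) :=
    Nat.card_le_card_of_injective _ hinj
  have h2 : Nat.card (Quotient p) =
      Nat.card {a : Quotient p // a ≠ Quotient.mk p x} + 1 := by
    rw [← Nat.card_congr (Equiv.optionSubtypeNe (Quotient.mk p x)), Finite.card_option]
  unfold nb
  omega

lemma nb_sup_pair_le (p : Setoid α) {x y : α} (h : ¬ p.r x y) :
    nb (p ⊔ pairS x y) + 1 ≤ nb p := by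
  have hne : Quotient.mk p x ≠ Quotient.mk p y := fun hc => h (Quotient.exact hc)
  have heq : pairMap p x y (Quotient.mk p x) = pairMap p x y (Quotient.mk p y) := by
    rw [pairMap_mk, pairMap_mk]
    exact Quotient.sound ((le_sup_right : pairS x y ≤ p ⊔ pairS x y)
      (Or.inr (Or.inl ⟨rfl, rfl⟩)))
  have := Fintype.card_lt_of_surjective_not_injective (pairMap p x y)
    (pairMap_surjective p x y) (fun hinj => hne (hinj heq))
  unfold nb
  simp only [Nat.card_eq_fintype_card]
  omega

end Counting


section Perm

open Equiv

lemma orbit_rel_apply (g : Equiv.Perm α) (z : α) : (orbitSetoid g).r z (g z) :=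
  ⟨1, by simp⟩

lemma orbit_le {g : Equiv.Perm α} {s : Setoid α} (hs : ∀ z, s.r z (g z)) :
    orbitSetoid g ≤ s := by
  have key : ∀ k : ℤ, ∀ a, s.r a ((g ^ k) a) := by
    intro k
    induction k using Int.induction_on with
    | zero => intro a; simpa using s.iseqv.refl a
    | succ k ih =>
        intro a
        have h1 : (g ^ ((k : ℤ) + 1)) a = g ((g ^ (k : ℤ)) a) := by
          rw [add_comm, zpow_one_add, Equiv.Perm.mul_apply]
        rw [h1]
        exact s.iseqv.trans (ih a) (hs _)
    | pred k ih =>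
        intro a
        have h1 : g ((g ^ (-(k : ℤ) - 1)) a) = (g ^ (-(k : ℤ))) a := by
          rw [← Equiv.Perm.mul_apply, ← zpow_one_add]
          norm_num
        exact s.iseqv.trans (ih a) (s.iseqv.symm (by rw [← h1]; exact hs _))
  rintro a b ⟨k, rfl⟩
  exact key k a

lemma orbit_fixed {g : Equiv.Perm α} {x y : α} (hx : g x = x)
    (h : (orbitSetoid g).r x y) : y = x := by
  rcases h with ⟨k, hk⟩
  rw [← hk]
  exact Equiv.Perm.zpow_apply_eq_self_of_apply_eq_self hx k

lemma pair_rel_swap (x y z : α) : (pairS x y).r z (Equiv.swap x y z) := by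
  rcases eq_or_ne z x with rfl | hzx
  · rw [Equiv.swap_apply_left]; exact Or.inr (Or.inl ⟨rfl, rfl⟩)
  rcases eq_or_ne z y with rfl | hzy
  · rw [Equiv.swap_apply_right]; exact Or.inr (Or.inr ⟨rfl, rfl⟩)
  · exact Or.inl (Equiv.swap_apply_of_ne_of_ne hzx hzy).symm

variable [Fintype α]

lemma ncyc_nonneg (g : Equiv.Perm α) : 0 ≤ ncyc g := Int.ofNat_nonneg _

lemma ncyc_le_card (g : Equiv.Perm α) : ncyc g ≤ (Fintype.card α : ℤ) := by
  unfold ncyc nb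
  have h := Nat.card_le_card_of_surjective (Quotient.mk (orbitSetoid g))
    (fun b => Quotient.exists_rep b)
  have h2 : Nat.card (Quotient (orbitSetoid g)) ≤ Fintype.card α := by
    rw [← Nat.card_eq_fintype_card]
    exact h
  exact_mod_cast h2

lemma ncyc_one : ncyc (1 : Equiv.Perm α) = (Fintype.card α : ℤ) := by
  unfold ncyc nb
  have hbij : Function.Bijective (Quotient.mk (orbitSetoid (1 : Equiv.Perm α))) := by
    constructor
    · intro a b hab
      obtain ⟨k, hk⟩ := Quotient.exact hab
      simpa using hk
    · exact fun b => Quotient.exists_rep b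
  rw [← Nat.card_eq_of_bijective _ hbij, Nat.card_eq_fintype_card]

lemma eq_one_of_ncyc {g : Equiv.Perm α} (hg : ncyc g = (Fintype.card α : ℤ)) :
    g = 1 := by
  have hcard : Fintype.card α = Fintype.card (Quotient (orbitSetoid g)) := by
    unfold ncyc nb at hg
    have h4 : Nat.card (Quotient (orbitSetoid g)) =
        Fintype.card (Quotient (orbitSetoid g)) := Nat.card_eq_fintype_card
    omega
  have hbij : Function.Bijective (Quotient.mk (orbitSetoid g)) :=
    (Fintype.bijective_iff_surjective_and_card _).2
      ⟨fun b => Quotient.exists_rep b, hcard⟩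
  ext x
  have : Quotient.mk (orbitSetoid g) (g x) = Quotient.mk (orbitSetoid g) x :=
    Quotient.sound ((orbitSetoid g).iseqv.symm (orbit_rel_apply g x))
  simpa using hbij.1 this

lemma ncyc_mul_swap_ge (g : Equiv.Perm α) {x y : α} (hxy : x ≠ y) :
    ncyc g - 1 ≤ ncyc (g * Equiv.swap x y) := by
  set τ := Equiv.swap x y with hτ
  have e1 : orbitSetoid g ⊔ pairS x y = orbitSetoid (g * τ) ⊔ pairS x y := by
    apply le_antisymm
    · refine sup_le ?_ le_sup_right
      apply orbit_le
      intro z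
      have hS : (orbitSetoid (g * τ) ⊔ pairS x y).r z (τ z) :=
        (le_sup_right : pairS x y ≤ _) (pair_rel_swap x y z)
      have hO : (orbitSetoid (g * τ) ⊔ pairS x y).r (τ z) ((g * τ) (τ z)) :=
        (le_sup_left : orbitSetoid (g * τ) ≤ _) (orbit_rel_apply _ _)
      have he : (g * τ) (τ z) = g z := by
        rw [Equiv.Perm.mul_apply, hτ, Equiv.swap_apply_self]
      rw [he] at hO
      exact (orbitSetoid (g * τ) ⊔ pairS x y).iseqv.trans hS hO
    · refine sup_le ?_ le_sup_right
      apply orbit_le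
      intro z
      have hS : (orbitSetoid g ⊔ pairS x y).r z (τ z) :=
        (le_sup_right : pairS x y ≤ _) (pair_rel_swap x y z)
      have hO : (orbitSetoid g ⊔ pairS x y).r (τ z) (g (τ z)) :=
        (le_sup_left : orbitSetoid g ≤ _) (orbit_rel_apply _ _)
      exact (orbitSetoid g ⊔ pairS x y).iseqv.trans hS hO
  have h1 := nb_sup_pair_ge (orbitSetoid g) x y
  have h2 : nb (orbitSetoid (g * τ) ⊔ pairS x y) ≤ nb (orbitSetoid (g * τ)) :=
    nb_le_of_le le_sup_left
  rw [e1] at h1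
  unfold ncyc
  omega

lemma ncyc_swap_mul (h : Equiv.Perm α) {x : α} (hx : h x ≠ x) :
    ncyc (Equiv.swap x (h x) * h) = ncyc h + 1 := by
  set τ := Equiv.swap x (h x) with hτ
  set h' := τ * h with hh'
  have e2 : orbitSetoid h = orbitSetoid h' ⊔ pairS x (h x) := by
    apply le_antisymm
    · apply orbit_le
      intro z
      have hO : (orbitSetoid h' ⊔ pairS x (h x)).r z (h' z) :=
        (le_sup_left : orbitSetoid h' ≤ _) (orbit_rel_apply _ _)
      have hS : (orbitSetoid h' ⊔ pairS x (h x)).r (h' z) (τ (h' z)) :=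
        (le_sup_right : pairS x (h x) ≤ _) (pair_rel_swap x (h x) _)
      have he : τ (h' z) = h z := by
        rw [hh', Equiv.Perm.mul_apply, hτ, Equiv.swap_apply_self]
      rw [he] at hS
      exact (orbitSetoid h' ⊔ pairS x (h x)).iseqv.trans hO hS
    · refine sup_le ?_ ?_
      · apply orbit_le
        intro z
        have h1 : (orbitSetoid h).r z (h z) := orbit_rel_apply h z
        have h2 : (orbitSetoid h).r (h z) (τ (h z)) := by
          rcases eq_or_ne (h z) x with he | he1
          · rw [he, hτ, Equiv.swap_apply_left]
            exact orbit_rel_apply h x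
          · rcases eq_or_ne (h z) (h x) with he | he2
            · rw [he, hτ, Equiv.swap_apply_right]
              exact (orbitSetoid h).iseqv.symm (orbit_rel_apply h x)
            · rw [hτ, Equiv.swap_apply_of_ne_of_ne he1 he2]
        have := (orbitSetoid h).iseqv.trans h1 h2
        rwa [show τ (h z) = h' z by rw [hh', Equiv.Perm.mul_apply]] at this
      · rintro a b (rfl | ⟨ha, hb⟩ | ⟨ha, hb⟩)
        · exact (orbitSetoid h).iseqv.refl _
        · rw [ha, hb]; exact orbit_rel_apply h x
        · rw [ha, hb]; exact (orbitSetoid h).iseqv.symm (orbit_rel_apply h x)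
  have hfix : h' x = x := by
    rw [hh', Equiv.Perm.mul_apply, hτ, Equiv.swap_apply_right]
  have hnr : ¬ (orbitSetoid h').r x (h x) := fun hr => hx (orbit_fixed hfix hr)
  have h1 := nb_sup_pair_ge (orbitSetoid h') x (h x)
  have h2 := nb_sup_pair_le (orbitSetoid h') hnr
  have h3 : ncyc h = nb (orbitSetoid h' ⊔ pairS x (h x)) := by rw [ncyc, e2]
  unfold ncyc at *
  omega

lemma exists_swap_list (h : Equiv.Perm α) : ∃ l : List (Equiv.Perm α),
    (∀ τ ∈ l, ∃ a b, a ≠ b ∧ τ = Equiv.swap a b) ∧ l.prod = h ∧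
    (l.length : ℤ) = (Fintype.card α : ℤ) - ncyc h := by
  suffices H : ∀ k : ℕ, ∀ h : Equiv.Perm α, (Fintype.card α : ℤ) - ncyc h ≤ k →
      ∃ l : List (Equiv.Perm α),
      (∀ τ ∈ l, ∃ a b, a ≠ b ∧ τ = Equiv.swap a b) ∧ l.prod = h ∧
      (l.length : ℤ) = (Fintype.card α : ℤ) - ncyc h by
    refine H (Fintype.card α) h ?_
    have := ncyc_nonneg h
    omega
  intro k
  induction k with
  | zero =>
      intro h hh
      have h1 := ncyc_le_card h
      have h2 : ncyc h = (Fintype.card α : ℤ) := by omega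
      refine ⟨[], by simp, by simp [eq_one_of_ncyc h2], by simp [h2]⟩
  | succ k ih =>
      intro h hh
      by_cases h1 : h = 1
      · subst h1
        refine ⟨[], by simp, by simp, by simp [ncyc_one]⟩
      · obtain ⟨x, hx⟩ : ∃ x, h x ≠ x := by
          by_contra hc
          push_neg at hc
          exact h1 (Equiv.ext hc)
        have hn : ncyc (Equiv.swap x (h x) * h) = ncyc h + 1 := ncyc_swap_mul h hx
        obtain ⟨l, hl1, hl2, hl3⟩ := ih (Equiv.swap x (h x) * h) (by omega)
        refine ⟨Equiv.swap x (h x) :: l, ?_, ?_, ?_⟩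
        · intro τ hτ
          rcases List.mem_cons.mp hτ with rfl | ht
          · exact ⟨x, h x, Ne.symm hx, rfl⟩
          · exact hl1 _ ht
        · rw [List.prod_cons, hl2, ← mul_assoc, Equiv.swap_mul_self, one_mul]
        · rw [List.length_cons]
          push_cast
          omega

lemma ncyc_mul_ge (g h : Equiv.Perm α) :
    ncyc g - ((Fintype.card α : ℤ) - ncyc h) ≤ ncyc (g * h) := by
  obtain ⟨l, hl1, hl2, hl3⟩ := exists_swap_list h
  suffices H : ∀ l : List (Equiv.Perm α),
      (∀ τ ∈ l, ∃ a b, a ≠ b ∧ τ = Equiv.swap a b) → ∀ g : Equiv.Perm α,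
      ncyc g - (l.length : ℤ) ≤ ncyc (g * l.prod) by
    have := H l hl1 g
    rw [hl2] at this
    omega
  clear hl1 hl2 hl3 l g h
  intro l
  induction l with
  | nil => intro _ g; simp
  | cons τ l ih =>
      intro hmem g
      obtain ⟨a, b, hab, rfl⟩ := hmem τ List.mem_cons_self
      have h1 := ih (fun τ' ht => hmem _ (List.mem_cons_of_mem _ ht)) (g * Equiv.swap a b)
      have h2 := ncyc_mul_swap_ge g hab
      rw [List.prod_cons, ← mul_assoc]
      rw [List.length_cons]
      push_cast
      omega

lemma cayley_nonneg (g h : Equiv.Perm α) : 0 ≤ cayley g h := by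
  have := ncyc_le_card (g * h⁻¹)
  unfold cayley
  omega

lemma cayley_le_card (g h : Equiv.Perm α) : cayley g h ≤ (Fintype.card α : ℤ) := by
  have := ncyc_nonneg (g * h⁻¹)
  unfold cayley
  omega

lemma cayley_triangle (g h k : Equiv.Perm α) :
    cayley g k ≤ cayley g h + cayley h k := by
  have h1 := ncyc_mul_ge (g * h⁻¹) (h * k⁻¹)
  have h2 : (g * h⁻¹) * (h * k⁻¹) = g * k⁻¹ := by group
  rw [h2] at h1
  unfold cayley
  omega

lemma cayley_one_one : cayley (1 : Equiv.Perm α) 1 = 0 := by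
  unfold cayley
  rw [inv_one, mul_one, ncyc_one]
  ring

lemma eq_one_of_cayley {g : Equiv.Perm α} (h : cayley g 1 = 0) : g = 1 := by
  apply eq_one_of_ncyc
  unfold cayley at h
  rw [inv_one, mul_one] at h
  omega

end Perm


section Graph

open RTN

variable {V : Type*} [Fintype V]

lemma wsum_nonneg {w : Sym2 V → ℝ} (hw : ∀ e, 0 ≤ w e) (S : Set (Sym2 V)) :
    0 ≤ wsum w S :=
  Finset.sum_nonneg fun e _ => hw e

lemma mem_mu_iff {G : SimpleGraph V} {r : Set V} {x y : V} (hadj : G.Adj x y) :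
    s(x, y) ∈ mu G r ↔ ((x ∈ r ∧ y ∉ r) ∨ (y ∈ r ∧ x ∉ r)) := by
  constructor
  · rintro ⟨-, x', y', hxy', hx', hy'⟩
    rcases Sym2.eq_iff.mp hxy' with ⟨rfl, rfl⟩ | ⟨rfl, rfl⟩
    · exact Or.inl ⟨hx', hy'⟩
    · exact Or.inr ⟨hx', hy'⟩
  · rintro (⟨hx, hy⟩ | ⟨hy, hx⟩)
    · exact ⟨G.mem_edgeSet.mpr hadj, x, y, rfl, hx, hy⟩
    · exact ⟨G.mem_edgeSet.mpr hadj, y, x, Sym2.eq_swap, hy, hx⟩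

lemma wsum_eq_sum_ite {w : Sym2 V → ℝ} {G : SimpleGraph V} {S : Set (Sym2 V)}
    (hS : S ⊆ G.edgeSet) :
    wsum w S = ∑ e ∈ Finset.univ.filter (· ∈ G.edgeSet), if e ∈ S then w e else 0 := by
  unfold wsum
  rw [Finset.sum_filter, Finset.sum_filter]
  refine Finset.sum_congr rfl fun e _ => ?_
  by_cases h1 : e ∈ S
  · simp [h1, hS h1]
  · simp [h1]

lemma permE_mk {ι : Type*} [Fintype ι] (g : V → Equiv.Perm ι) (x y : V) :
    permE g s(x, y) = (cayley (g x) (g y) : ℝ) := rfl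

lemma Renergy_eq_sum {ι : Type*} [Fintype ι] (G : SimpleGraph V) (w : Sym2 V → ℝ)
    (g : V → Equiv.Perm ι) :
    Renergy G w g = ∑ e ∈ Finset.univ.filter (· ∈ G.edgeSet), w e * permE g e := by
  unfold Renergy wsum
  congr

lemma permE_nonneg {ι : Type*} [Fintype ι] (g : V → Equiv.Perm ι) (e : Sym2 V) :
    0 ≤ permE g e := by
  induction e using Sym2.ind with
  | _ x y =>
      rw [permE_mk]
      exact_mod_cast cayley_nonneg _ _

lemma Renergy_nonneg {ι : Type*} [Fintype ι] {G : SimpleGraph V} {w : Sym2 V → ℝ}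
    (hw : ∀ e, 0 ≤ w e) (g : V → Equiv.Perm ι) : 0 ≤ Renergy G w g := by
  rw [Renergy_eq_sum]
  exact Finset.sum_nonneg fun e _ => mul_nonneg (hw e) (permE_nonneg g e)

lemma minCut_le {G : SimpleGraph V} {w : Sym2 V → ℝ} (hw : ∀ e, 0 ≤ w e)
    {X Y r : Set V} (hr : IsCut X Y r) : minCut G w X Y ≤ wsum w (mu G r) := by
  apply csInf_le
  · exact ⟨0, by rintro a ⟨r', -, rfl⟩; exact wsum_nonneg hw _⟩
  · exact ⟨r, hr, rfl⟩

lemma Rval_le {ι : Type*} [Fintype ι] {G : SimpleGraph V} {w : Sym2 V → ℝ}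
    (hw : ∀ e, 0 ≤ w e) {A B C : Set V} {g₁ g₂ : Equiv.Perm ι}
    {g : V → Equiv.Perm ι} (hA : ∀ v ∈ A, g v = g₁) (hB : ∀ v ∈ B, g v = g₂)
    (hC : ∀ v ∈ C, g v = 1) :
    Rval G w A B C g₁ g₂ ≤ Renergy G w g := by
  apply csInf_le
  · exact ⟨0, by rintro a ⟨g', -, -, -, rfl⟩; exact Renergy_nonneg hw g'⟩
  · exact ⟨g, hA, hB, hC, rfl⟩

lemma sum_ite_const (T : Finset ℤ) (P : ℤ → Prop) [DecidablePred P] (c : ℝ) :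
    (∑ t ∈ T, if P t then c else 0) = ((T.filter P).card : ℝ) * c := by
  rw [← Finset.sum_filter, Finset.sum_const, nsmul_eq_mul]

end Graph

end RTNAux

/-- If `g` is an optimal configuration for the permutation optimization
`R` and the minimal cut `r_{AB}` for `A∪B : C` is unique, then `g(v) = id` for every
vertex `v ∈ V ∖ r_{AB}`. -/
theorem optimal_is_id_outside_wedge {V : Type*} [Fintype V] (G : SimpleGraph V)
    (w : Sym2 V → ℝ) (hw : ∀ e, 0 ≤ w e) (A B C : Set V) (hbdy : RTN.Bdy A B C)
    (hcomp : ∀ v : V, ∃ b ∈ A ∪ B ∪ C, G.Reachable v b)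
    {n m : ℕ} (hn : 2 ≤ n) (hm2 : 2 ≤ m) (hm : m % 2 = 0)
    (rAB : Set V) (hcut : RTN.IsCut (A ∪ B) C rAB)
    (hcutMin : RTN.wsum w (RTN.mu G rAB) = RTN.minCut G w (A ∪ B) C)
    (hcutUnique : ∀ r : Set V, RTN.IsCut (A ∪ B) C r →
      RTN.wsum w (RTN.mu G r) = RTN.minCut G w (A ∪ B) C → r = rAB)
    (g : V → Equiv.Perm (Fin n × Fin m))
    (hgA : ∀ v ∈ A, g v = RTN.gA n m) (hgB : ∀ v ∈ B, g v = RTN.gB n m)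
    (hgC : ∀ v ∈ C, g v = 1)
    (hopt : RTN.Renergy G w g = RTN.Rval G w A B C (RTN.gA n m) (RTN.gB n m)) :
    ∀ v ∈ rABᶜ, g v = 1 := by
  classical
  have hAB_sub : A ∪ B ⊆ rAB := hcut.1
  have hC_sub : C ⊆ rABᶜ := hcut.2
  set N : ℤ := (Fintype.card (Fin n × Fin m) : ℤ) with hN
  have hN1 : 1 ≤ N := by
    rw [hN]
    have hcardnm : Fintype.card (Fin n × Fin m) = n * m := by simp
    have h1 : 2 * 2 ≤ n * m := Nat.mul_le_mul hn hm2
    have h2 : 1 ≤ Fintype.card (Fin n × Fin m) := by omega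
    exact_mod_cast h2
  set d : V → ℤ := fun u => RTN.cayley (g u) 1 with hd
  have hd0 : ∀ u, 0 ≤ d u := fun u => RTNAux.cayley_nonneg _ _
  have hdN : ∀ u, d u ≤ N := fun u => RTNAux.cayley_le_card _ _
  have hdC : ∀ u ∈ C, d u = 0 := fun u hu => by
    simp only [hd]
    rw [hgC u hu]
    exact RTNAux.cayley_one_one
  set h : V → Equiv.Perm (Fin n × Fin m) := fun u => if u ∈ rAB then g u else 1 with hh
  have hRgh : RTN.Renergy G w g ≤ RTN.Renergy G w h := by
    rw [hopt]
    refine RTNAux.Rval_le hw ?_ ?_ ?_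
    · intro u hu
      simp only [hh]
      rw [if_pos (hAB_sub (Set.mem_union_left B hu))]
      exact hgA u hu
    · intro u hu
      simp only [hh]
      rw [if_pos (hAB_sub (Set.mem_union_right A hu))]
      exact hgB u hu
    · intro u hu
      simp only [hh]
      rw [if_neg (hC_sub hu)]
  set rt : ℤ → Set V := fun t => rAB ∪ {u | t ≤ d u} with hrt
  have hrt_sub : ∀ t, rAB ⊆ rt t := fun t => Set.subset_union_left
  have hmem_rt : ∀ t u, u ∈ rt t ↔ (u ∈ rAB ∨ t ≤ d u) := fun t u => by
    simp only [hrt, Set.mem_union, Set.mem_setOf_eq]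
  have hcut_t : ∀ t : ℤ, 1 ≤ t → RTN.IsCut (A ∪ B) C (rt t) := by
    intro t ht
    refine ⟨hAB_sub.trans (hrt_sub t), ?_⟩
    intro u hu
    simp only [Set.mem_compl_iff]
    rw [hmem_rt]
    push_neg
    refine ⟨hC_sub hu, ?_⟩
    have := hdC u hu
    omega
  have hmu_sub : ∀ r : Set V, RTN.mu G r ⊆ G.edgeSet := fun r e he => he.1
  have hcount1 : ∀ z : ℤ, 0 ≤ z → z ≤ N →
      ((Finset.Icc (1:ℤ) N).filter (fun t => z < t)).card = (N - z).toNat := by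
    intro z h0 hzN
    have hfe : (Finset.Icc (1:ℤ) N).filter (fun t => z < t) = Finset.Icc (z+1) N := by
      ext t
      simp only [Finset.mem_filter, Finset.mem_Icc]
      omega
    rw [hfe, Int.card_Icc]
    omega
  -- Case: both endpoints inside the cut
  have key1 : ∀ x y : V, G.Adj x y → x ∈ rAB → y ∈ rAB →
      (∑ t ∈ Finset.Icc (1:ℤ) N, if s(x,y) ∈ RTN.mu G (rt t) then w s(x,y) else 0)
        + w s(x,y) * RTN.permE h s(x,y)
      ≤ (N:ℝ) * (if s(x,y) ∈ RTN.mu G rAB then w s(x,y) else 0)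
        + w s(x,y) * RTN.permE g s(x,y) := by
    intro x y hadj hx hy
    have h0 : ∀ t : ℤ, s(x,y) ∉ RTN.mu G (rt t) := by
      intro t hmem
      rcases (RTNAux.mem_mu_iff hadj).mp hmem with ⟨-, hyr⟩ | ⟨-, hxr⟩
      · exact hyr (hrt_sub t hy)
      · exact hxr (hrt_sub t hx)
    have h0' : s(x,y) ∉ RTN.mu G rAB := by
      intro hmem
      rcases (RTNAux.mem_mu_iff hadj).mp hmem with ⟨-, hyr⟩ | ⟨-, hxr⟩
      · exact hyr hy
      · exact hxr hx
    have hsum : (∑ t ∈ Finset.Icc (1:ℤ) N,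
        if s(x,y) ∈ RTN.mu G (rt t) then w s(x,y) else 0) = 0 :=
      Finset.sum_eq_zero fun t _ => if_neg (h0 t)
    have hhx : h x = g x := by simp only [hh]; rw [if_pos hx]
    have hhy : h y = g y := by simp only [hh]; rw [if_pos hy]
    rw [hsum, if_neg h0', RTNAux.permE_mk, RTNAux.permE_mk, hhx, hhy]
    linarith
  -- Case: crossing edge
  have key2 : ∀ x y : V, G.Adj x y → x ∈ rAB → y ∉ rAB →
      (∑ t ∈ Finset.Icc (1:ℤ) N, if s(x,y) ∈ RTN.mu G (rt t) then w s(x,y) else 0)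
        + w s(x,y) * RTN.permE h s(x,y)
      ≤ (N:ℝ) * (if s(x,y) ∈ RTN.mu G rAB then w s(x,y) else 0)
        + w s(x,y) * RTN.permE g s(x,y) := by
    intro x y hadj hx hy
    have hxy_mu : s(x,y) ∈ RTN.mu G rAB := (RTNAux.mem_mu_iff hadj).mpr (Or.inl ⟨hx, hy⟩)
    have hchi : ∀ t : ℤ, s(x,y) ∈ RTN.mu G (rt t) ↔ d y < t := by
      intro t
      rw [RTNAux.mem_mu_iff hadj]
      constructor
      · rintro (⟨-, hyr⟩ | ⟨-, hxr'⟩)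
        · rw [hmem_rt] at hyr
          push_neg at hyr
          obtain ⟨-, h2⟩ := hyr
          omega
        · exact absurd (hrt_sub t hx) hxr'
      · intro ht
        refine Or.inl ⟨hrt_sub t hx, ?_⟩
        rw [hmem_rt]
        push_neg
        exact ⟨hy, by omega⟩
    have hsum : (∑ t ∈ Finset.Icc (1:ℤ) N,
        if s(x,y) ∈ RTN.mu G (rt t) then w s(x,y) else 0)
        = ((N:ℝ) - (d y : ℝ)) * w s(x,y) := by
      have e1 : (∑ t ∈ Finset.Icc (1:ℤ) N,
          if s(x,y) ∈ RTN.mu G (rt t) then w s(x,y) else 0)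
          = ∑ t ∈ Finset.Icc (1:ℤ) N, if d y < t then w s(x,y) else 0 :=
        Finset.sum_congr rfl fun t _ => if_congr (hchi t) rfl rfl
      rw [e1, RTNAux.sum_ite_const, hcount1 (d y) (hd0 y) (hdN y)]
      have h2 : ((N - d y).toNat : ℤ) = N - d y := Int.toNat_of_nonneg (by
        have := hdN y
        omega)
      have h3 : (((N - d y).toNat : ℕ) : ℝ) = (N:ℝ) - (d y:ℝ) := by exact_mod_cast h2
      rw [h3]
    have hhx : h x = g x := by simp only [hh]; rw [if_pos hx]
    have hhy : h y = (1 : Equiv.Perm (Fin n × Fin m)) := by simp only [hh]; rw [if_neg hy]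
    rw [hsum, RTNAux.permE_mk, RTNAux.permE_mk, hhx, hhy, if_pos hxy_mu]
    have htri : RTN.cayley (g x) 1 ≤ RTN.cayley (g x) (g y) + RTN.cayley (g y) 1 :=
      RTNAux.cayley_triangle _ _ _
    have hdy : d y = RTN.cayley (g y) 1 := by simp only [hd]
    have hint : ((N - d y) + RTN.cayley (g x) 1 : ℤ) ≤ N + RTN.cayley (g x) (g y) := by
      omega
    have hintR : ((N:ℝ) - (d y:ℝ)) + (RTN.cayley (g x) 1 : ℝ)
        ≤ (N:ℝ) + (RTN.cayley (g x) (g y) : ℝ) := by exact_mod_cast hint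
    push_cast
    nlinarith [mul_le_mul_of_nonneg_left hintR (hw s(x,y)), hw s(x,y)]
  -- Case: both endpoints outside, ordered
  have key4 : ∀ x y : V, G.Adj x y → x ∉ rAB → y ∉ rAB → d y ≤ d x →
      (∑ t ∈ Finset.Icc (1:ℤ) N, if s(x,y) ∈ RTN.mu G (rt t) then w s(x,y) else 0)
        + w s(x,y) * RTN.permE h s(x,y)
      ≤ (N:ℝ) * (if s(x,y) ∈ RTN.mu G rAB then w s(x,y) else 0)
        + w s(x,y) * RTN.permE g s(x,y) := by
    intro x y hadj hx hy hdyx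
    have h0' : s(x,y) ∉ RTN.mu G rAB := by
      intro hmem
      rcases (RTNAux.mem_mu_iff hadj).mp hmem with ⟨hxr, -⟩ | ⟨hyr, -⟩
      · exact hx hxr
      · exact hy hyr
    have hchi : ∀ t : ℤ, s(x,y) ∈ RTN.mu G (rt t) ↔ (d y < t ∧ t ≤ d x) := by
      intro t
      rw [RTNAux.mem_mu_iff hadj]
      have hxr : x ∈ rt t ↔ t ≤ d x := by rw [hmem_rt]; exact or_iff_right hx
      have hyr : y ∈ rt t ↔ t ≤ d y := by rw [hmem_rt]; exact or_iff_right hy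
      rw [hxr, hyr]
      constructor
      · rintro (⟨h1, h2⟩ | ⟨h1, h2⟩)
        · omega
        · omega
      · intro h1
        exact Or.inl ⟨by omega, by omega⟩
    have hcount : ((Finset.Icc (1:ℤ) N).filter (fun t => d y < t ∧ t ≤ d x)).card
        = (d x - d y).toNat := by
      have hfe : (Finset.Icc (1:ℤ) N).filter (fun t => d y < t ∧ t ≤ d x)
          = Finset.Icc (d y + 1) (d x) := by
        ext t
        simp only [Finset.mem_filter, Finset.mem_Icc]
        have h1 := hd0 y
        have h2 := hdN x
        omega
      rw [hfe, Int.card_Icc]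
      omega
    have hsum : (∑ t ∈ Finset.Icc (1:ℤ) N,
        if s(x,y) ∈ RTN.mu G (rt t) then w s(x,y) else 0)
        = ((d x : ℝ) - (d y : ℝ)) * w s(x,y) := by
      have e1 : (∑ t ∈ Finset.Icc (1:ℤ) N,
          if s(x,y) ∈ RTN.mu G (rt t) then w s(x,y) else 0)
          = ∑ t ∈ Finset.Icc (1:ℤ) N, if (d y < t ∧ t ≤ d x) then w s(x,y) else 0 :=
        Finset.sum_congr rfl fun t _ => if_congr (hchi t) rfl rfl
      rw [e1, RTNAux.sum_ite_const, hcount]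
      have h2 : ((d x - d y).toNat : ℤ) = d x - d y := Int.toNat_of_nonneg (by omega)
      have h3 : (((d x - d y).toNat : ℕ) : ℝ) = (d x:ℝ) - (d y:ℝ) := by exact_mod_cast h2
      rw [h3]
    have hhx : h x = (1 : Equiv.Perm (Fin n × Fin m)) := by simp only [hh]; rw [if_neg hx]
    have hhy : h y = (1 : Equiv.Perm (Fin n × Fin m)) := by simp only [hh]; rw [if_neg hy]
    rw [hsum, RTNAux.permE_mk, RTNAux.permE_mk, hhx, hhy, if_neg h0',
      RTNAux.cayley_one_one]
    have htri : RTN.cayley (g x) 1 ≤ RTN.cayley (g x) (g y) + RTN.cayley (g y) 1 :=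
      RTNAux.cayley_triangle _ _ _
    have hdy : d y = RTN.cayley (g y) 1 := by simp only [hd]
    have hdx : d x = RTN.cayley (g x) 1 := by simp only [hd]
    have hint : (d x - d y : ℤ) ≤ RTN.cayley (g x) (g y) := by omega
    have hintR : (d x:ℝ) - (d y:ℝ) ≤ (RTN.cayley (g x) (g y) : ℝ) := by exact_mod_cast hint
    push_cast
    nlinarith [mul_le_mul_of_nonneg_left hintR (hw s(x,y)), hw s(x,y)]
  have key : ∀ x y : V, G.Adj x y →
      (∑ t ∈ Finset.Icc (1:ℤ) N, if s(x,y) ∈ RTN.mu G (rt t) then w s(x,y) else 0)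
        + w s(x,y) * RTN.permE h s(x,y)
      ≤ (N:ℝ) * (if s(x,y) ∈ RTN.mu G rAB then w s(x,y) else 0)
        + w s(x,y) * RTN.permE g s(x,y) := by
    intro x y hadj
    by_cases hx : x ∈ rAB <;> by_cases hy : y ∈ rAB
    · exact key1 x y hadj hx hy
    · exact key2 x y hadj hx hy
    · have hs := key2 y x hadj.symm hy hx
      rwa [Sym2.eq_swap] at hs
    · rcases le_total (d y) (d x) with hle | hle
      · exact key4 x y hadj hx hy hle
      · have hs := key4 y x hadj.symm hy hx hle
        rwa [Sym2.eq_swap] at hs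
  have hperedge : ∀ e ∈ Finset.univ.filter (· ∈ G.edgeSet),
      (∑ t ∈ Finset.Icc (1:ℤ) N, if e ∈ RTN.mu G (rt t) then w e else 0)
        + w e * RTN.permE h e
      ≤ (N:ℝ) * (if e ∈ RTN.mu G rAB then w e else 0) + w e * RTN.permE g e := by
    intro e he
    have he' : e ∈ G.edgeSet := (Finset.mem_filter.mp he).2
    clear he
    revert he'
    refine Sym2.ind (f := fun e => e ∈ G.edgeSet →
      (∑ t ∈ Finset.Icc (1:ℤ) N, if e ∈ RTN.mu G (rt t) then w e else 0)
        + w e * RTN.permE h e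
      ≤ (N:ℝ) * (if e ∈ RTN.mu G rAB then w e else 0) + w e * RTN.permE g e) ?_ e
    intro x y hxy
    exact key x y (G.mem_edgeSet.mp hxy)
  have hsumle := Finset.sum_le_sum hperedge
  have hL : (∑ t ∈ Finset.Icc (1:ℤ) N, RTN.wsum w (RTN.mu G (rt t))) + RTN.Renergy G w h
      = ∑ e ∈ Finset.univ.filter (· ∈ G.edgeSet),
        ((∑ t ∈ Finset.Icc (1:ℤ) N, if e ∈ RTN.mu G (rt t) then w e else 0)
          + w e * RTN.permE h e) := by
    calc (∑ t ∈ Finset.Icc (1:ℤ) N, RTN.wsum w (RTN.mu G (rt t))) + RTN.Renergy G w h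
        = (∑ t ∈ Finset.Icc (1:ℤ) N, ∑ e ∈ Finset.univ.filter (· ∈ G.edgeSet),
            if e ∈ RTN.mu G (rt t) then w e else 0)
          + ∑ e ∈ Finset.univ.filter (· ∈ G.edgeSet), w e * RTN.permE h e := by
          rw [RTNAux.Renergy_eq_sum]
          congr 1
          exact Finset.sum_congr rfl fun t _ => RTNAux.wsum_eq_sum_ite (hmu_sub (rt t))
      _ = (∑ e ∈ Finset.univ.filter (· ∈ G.edgeSet), ∑ t ∈ Finset.Icc (1:ℤ) N,
            if e ∈ RTN.mu G (rt t) then w e else 0)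
          + ∑ e ∈ Finset.univ.filter (· ∈ G.edgeSet), w e * RTN.permE h e := by
          rw [Finset.sum_comm]
      _ = ∑ e ∈ Finset.univ.filter (· ∈ G.edgeSet),
          ((∑ t ∈ Finset.Icc (1:ℤ) N, if e ∈ RTN.mu G (rt t) then w e else 0)
            + w e * RTN.permE h e) := (Finset.sum_add_distrib).symm
  have hR : (N:ℝ) * RTN.wsum w (RTN.mu G rAB) + RTN.Renergy G w g
      = ∑ e ∈ Finset.univ.filter (· ∈ G.edgeSet),
        ((N:ℝ) * (if e ∈ RTN.mu G rAB then w e else 0) + w e * RTN.permE g e) := by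
    rw [RTNAux.wsum_eq_sum_ite (hmu_sub rAB), RTNAux.Renergy_eq_sum, Finset.mul_sum,
      ← Finset.sum_add_distrib]
  rw [← hL, ← hR] at hsumle
  have hge : ∀ t ∈ Finset.Icc (1:ℤ) N,
      RTN.wsum w (RTN.mu G rAB) ≤ RTN.wsum w (RTN.mu G (rt t)) := by
    intro t ht
    rw [hcutMin]
    exact RTNAux.minCut_le hw (hcut_t t (Finset.mem_Icc.mp ht).1)
  have hT1 : (1:ℤ) ∈ Finset.Icc (1:ℤ) N := Finset.mem_Icc.mpr ⟨le_refl _, hN1⟩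
  have hsplit := Finset.add_sum_erase (Finset.Icc (1:ℤ) N)
    (fun t => RTN.wsum w (RTN.mu G (rt t))) hT1
  have hcardE : ((((Finset.Icc (1:ℤ) N).erase 1).card : ℕ) : ℤ) = N - 1 := by
    rw [Finset.card_erase_of_mem hT1, Int.card_Icc]
    omega
  have herase_ge : ((N:ℝ) - 1) * RTN.wsum w (RTN.mu G rAB)
      ≤ ∑ t ∈ (Finset.Icc (1:ℤ) N).erase 1, RTN.wsum w (RTN.mu G (rt t)) := by
    have h2 := Finset.card_nsmul_le_sum ((Finset.Icc (1:ℤ) N).erase 1)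
      (fun t => RTN.wsum w (RTN.mu G (rt t))) (RTN.wsum w (RTN.mu G rAB))
      (fun t ht => hge t (Finset.mem_of_mem_erase ht))
    rw [nsmul_eq_mul] at h2
    have h3 : ((((Finset.Icc (1:ℤ) N).erase 1).card : ℕ) : ℝ) = (N:ℝ) - 1 := by
      exact_mod_cast hcardE
    rw [h3] at h2
    exact h2
  have hfin : RTN.wsum w (RTN.mu G (rt 1)) ≤ RTN.wsum w (RTN.mu G rAB) := by
    have h4 : RTN.wsum w (RTN.mu G (rt 1))
        + ∑ t ∈ (Finset.Icc (1:ℤ) N).erase 1, RTN.wsum w (RTN.mu G (rt t))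
        ≤ (N:ℝ) * RTN.wsum w (RTN.mu G rAB) := by
      rw [hsplit]
      linarith
    linarith
  have heq : RTN.wsum w (RTN.mu G (rt 1)) = RTN.minCut G w (A ∪ B) C := by
    rw [← hcutMin]
    exact le_antisymm hfin (hge 1 hT1)
  have hr1 : rt 1 = rAB := hcutUnique (rt 1) (hcut_t 1 (le_refl _)) heq
  intro v hv
  have hv1 : v ∉ rt 1 := by rw [hr1]; exact hv
  have h6 : ¬ (1:ℤ) ≤ d v := fun hle => hv1 ((hmem_rt 1 v).mpr (Or.inr hle))
  have h7 : d v = 0 := le_antisymm (by omega) (hd0 v)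
  exact RTNAux.eq_one_of_cayley h7
end
end
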